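/- arXiv:0806.0073 — 10 statements merged into one kernel-verified Lean document; each statement's English description precedes it below -/
import Mathlib

section
/- Let w : (0,∞) → ℝ be integrable on (0,t) for every t > 0 and suppose that |Pw(t) − w(t)| ≤ C for all t > 0. Then Pw is itself integrable on (0,t) for every t > 0 and |P(Pw)(t) − Pw(t)| ≤ C for all t > 0. (In the notation of the paper: the averaging operator P is bounded on the space W, with ‖Pw‖_W ≤ ‖w‖_W.) -/
open MeasureTheory Set Real Filter

/-- The averaging operator `Pw(t) = (1/t) ∫₀ᵗ w(s) ds`. -/
noncomputable def Pav (w : ℝ → ℝ) (t : ℝ) : ℝ := (1 / t) * ∫ s in Ioo (0 : ℝ) t, w s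

/-- The averaging operator `P` is bounded on the space `W`: if `w` is locally integrable
near `0` and `|Pw - w| ≤ C` on `(0,∞)`, then so is `Pw`, with the same bound. -/
theorem P_bounded_on_W (w : ℝ → ℝ) (C : ℝ)
    (hInt : ∀ t > (0 : ℝ), IntegrableOn w (Ioo 0 t))
    (hW : ∀ t > (0 : ℝ), |Pav w t - w t| ≤ C) :
    (∀ t > (0 : ℝ), IntegrableOn (Pav w) (Ioo 0 t)) ∧
      ∀ t > (0 : ℝ), |Pav (Pav w) t - Pav w t| ≤ C := by
  have hPint : ∀ t > (0 : ℝ), IntegrableOn (Pav w) (Ioo 0 t) := by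
    intro t ht
    -- Pav w is continuous on Ioo 0 t
    have hcont : ContinuousOn (Pav w) (Ioo 0 t) := by
      have h1 : ContinuousOn (fun x => ∫ s in Ioc (0:ℝ) x, w s) (Icc 0 t) := by
        apply intervalIntegral.continuousOn_primitive
        rw [integrableOn_Icc_iff_integrableOn_Ioo]
        exact hInt t ht
      have h2 : ContinuousOn (fun x => (1 / x) * ∫ s in Ioc (0:ℝ) x, w s) (Ioo 0 t) := by
        apply ContinuousOn.mul
        · exact continuousOn_const.div continuousOn_id fun x hx => ne_of_gt hx.1
        · exact h1.mono Ioo_subset_Icc_self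
      refine ContinuousOn.congr h2 fun x _ => ?_
      simp [Pav, integral_Ioc_eq_integral_Ioo]
    have hmeas : AEStronglyMeasurable (Pav w) (volume.restrict (Ioo 0 t)) :=
      hcont.aestronglyMeasurable measurableSet_Ioo
    have hbound : ∀ᵐ x ∂(volume.restrict (Ioo 0 t)), ‖Pav w x‖ ≤ C + |w x| := by
      filter_upwards [ae_restrict_mem measurableSet_Ioo] with x hx
      have := hW x hx.1
      calc ‖Pav w x‖ = |Pav w x - w x + w x| := by norm_num
        _ ≤ |Pav w x - w x| + |w x| := abs_add_le _ _
        _ ≤ C + |w x| := by linarith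
    have hg : IntegrableOn (fun x => C + |w x|) (Ioo 0 t) :=
      (integrableOn_const (by simp [Real.volume_Ioo])).add (hInt t ht).abs
    exact Integrable.mono' hg hmeas hbound
  refine ⟨hPint, fun t ht => ?_⟩
  have hC : 0 ≤ C := le_trans (abs_nonneg _) (hW 1 one_pos)
  have hsub : IntegrableOn (fun s => Pav w s - w s) (Ioo 0 t) :=
    (hPint t ht).sub (hInt t ht)
  have key : Pav (Pav w) t - Pav w t = (1 / t) * ∫ s in Ioo (0:ℝ) t, (Pav w s - w s) := by
    rw [integral_sub (hPint t ht) (hInt t ht)]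
    simp only [Pav]
    ring
  rw [key, abs_mul]
  have hvol : (volume (Ioo (0:ℝ) t)) < ⊤ := by simp [Real.volume_Ioo]
  have hle : ‖∫ s in Ioo (0:ℝ) t, (Pav w s - w s)‖ ≤ C * (volume (Ioo (0:ℝ) t)).toReal := by
    apply norm_setIntegral_le_of_norm_le_const hvol
    · intro x hx
      exact hW x hx.1
  have hvolval : (volume (Ioo (0:ℝ) t)).toReal = t := by
    simp [Real.volume_Ioo, ENNReal.toReal_ofReal ht.le]
  rw [hvolval] at hle
  have h1t : |1 / t| = 1 / t := abs_of_pos (by positivity)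
  calc |1 / t| * |∫ s in Ioo (0:ℝ) t, (Pav w s - w s)|
      ≤ (1 / t) * (C * t) := by
        rw [h1t]
        exact mul_le_mul_of_nonneg_left hle (by positivity)
    _ = C := by field_simp
end

section
/- Let w : (0,∞) → ℝ be integrable on (0,t) for every t > 0 and suppose that ‖w‖_W := sup_{t>0} |Pw(t) − w(t)| ≤ C. Then |Pw(t) − Pw(1)| ≤ C·|log t| for all t > 0; in particular |Pw(t)| ≤ |Pw(1)| + C·(1 + |log t|) for all t > 0. -/
open MeasureTheory Set Real Filter

lemma integral_inv_sq_Ioo' {c b : ℝ} (hc : 0 < c) (hcb : c ≤ b) :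
    ∫ s in Ioo c b, (s^2)⁻¹ = c⁻¹ - b⁻¹ := by
  have h1 : ∫ s in Ioo c b, (s^2)⁻¹ = ∫ s in c..b, (s^2)⁻¹ := by
    rw [intervalIntegral.integral_of_le hcb, integral_Ioc_eq_integral_Ioo]
  have h0 : (0:ℝ) ∉ Set.uIcc c b := by
    rw [uIcc_of_le hcb]; intro h; exact absurd h.1 (not_le.2 hc)
  have h2 := integral_zpow (a:=c) (b:=b) (n := -2) (Or.inr ⟨by norm_num, h0⟩)
  have h3 : ∀ s : ℝ, (s:ℝ) ^ (-2:ℤ) = (s^2)⁻¹ := by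
    intro s; rw [zpow_neg, ← zpow_natCast]; norm_num
  simp only [h3] at h2
  rw [h1, h2]
  have : (-2 + 1 : ℤ) = -1 := by norm_num
  rw [this]
  push_cast
  rw [zpow_neg_one, zpow_neg_one]
  ring

lemma Pav_key (w : ℝ → ℝ) (C : ℝ)
    (hInt : ∀ t > (0 : ℝ), IntegrableOn w (Ioo 0 t))
    (hW : ∀ t > (0 : ℝ), |Pav w t - w t| ≤ C)
    {a b : ℝ} (ha : 0 < a) (hab : a < b) :
    |Pav w b - Pav w a| ≤ C * (Real.log b - Real.log a) := by
  have hb : 0 < b := ha.trans hab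
  have hC0 : 0 ≤ C := le_trans (abs_nonneg _) (hW 1 one_pos)
  -- w is integrable on (0,b] family
  have hwb : IntegrableOn w (Ioo 0 b) := hInt b hb
  have hwab : IntegrableOn w (Ioo a b) :=
    hwb.mono_set (fun x hx => ⟨ha.trans hx.1, hx.2⟩)
  -- continuity of the primitive G
  set G : ℝ → ℝ := fun s => ∫ u in Ioo (0:ℝ) s, w u with hGdef
  have hGIcc : IntegrableOn w (Icc 0 b) := by
    refine hwb.congr_set_ae ?_
    exact Ioo_ae_eq_Icc.symm
  have hGcont : ContinuousOn G (Icc 0 b) := by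
    have h := intervalIntegral.continuousOn_primitive (f := w) (μ := volume) (a := 0) (b := b) hGIcc
    refine h.congr fun x _ => ?_
    simp only [hGdef]
    rw [integral_Ioc_eq_integral_Ioo]
  -- Pav continuity and integrability on Ioo a b
  have hPavCont : ContinuousOn (Pav w) (Ioo a b) := by
    have : ContinuousOn (fun s : ℝ => (1/s)) (Ioo a b) :=
      continuousOn_const.div continuousOn_id (fun x hx => ne_of_gt (ha.trans hx.1))
    exact this.mul (hGcont.mono (fun x hx => ⟨(ha.trans hx.1).le, hx.2.le⟩))
  have hPavMeas : AEStronglyMeasurable (Pav w) (volume.restrict (Ioo a b)) :=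
    hPavCont.aestronglyMeasurable measurableSet_Ioo
  have hPavInt : IntegrableOn (Pav w) (Ioo a b) := by
    refine Integrable.mono' (hwab.norm.add (integrable_const C)) hPavMeas ?_
    filter_upwards [ae_restrict_mem measurableSet_Ioo] with s hs
    have h1 := hW s (ha.trans hs.1)
    have : |Pav w s| ≤ |w s| + |Pav w s - w s| := by
      calc |Pav w s| = |w s + (Pav w s - w s)| := by ring_nf
        _ ≤ |w s| + |Pav w s - w s| := abs_add_le _ _
    calc ‖Pav w s‖ = |Pav w s| := rfl
      _ ≤ |w s| + C := le_trans this (by linarith)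
      _ = ‖w s‖ + C := rfl
  -- Fubini setup
  set μ := volume.restrict (Ioo a b) with hμ
  set ν := volume.restrict (Ioo (0:ℝ) b) with hν
  haveI : IsFiniteMeasure μ := by
    constructor
    rw [hμ, Measure.restrict_apply_univ, Real.volume_Ioo]
    exact ENNReal.ofReal_lt_top
  set F : ℝ → ℝ → ℝ := fun s u => (Ioo (0:ℝ) s).indicator w u * (s^2)⁻¹ with hFdef
  have hFmeas : AEStronglyMeasurable (Function.uncurry F) (μ.prod ν) := by
    have hS : MeasurableSet {p : ℝ × ℝ | 0 < p.2 ∧ p.2 < p.1} :=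
      ((isOpen_lt continuous_const continuous_snd).inter
        (isOpen_lt continuous_snd continuous_fst)).measurableSet
    have h1 : AEStronglyMeasurable (fun p : ℝ × ℝ => w p.2 * ((p.1^2)⁻¹)) (μ.prod ν) := by
      refine AEStronglyMeasurable.mul ?_ ?_
      · exact (hwb.aestronglyMeasurable).comp_snd
      · exact ((measurable_fst.pow_const 2).inv).aestronglyMeasurable
    have heq : Function.uncurry F =
        {p : ℝ × ℝ | 0 < p.2 ∧ p.2 < p.1}.indicator (fun p => w p.2 * ((p.1^2)⁻¹)) := by
      ext p
      by_cases hp : 0 < p.2 ∧ p.2 < p.1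
      · simp [Function.uncurry, hFdef, indicator_of_mem, hp, Set.mem_Ioo,
          Set.indicator_of_mem (show p.2 ∈ Ioo 0 p.1 from hp)]
      · have hp' : p.2 ∉ Ioo 0 p.1 := by simpa [Set.mem_Ioo] using hp
        simp [Function.uncurry, hFdef, Set.indicator_of_notMem hp',
          Set.indicator_of_notMem (show p ∉ {p : ℝ × ℝ | 0 < p.2 ∧ p.2 < p.1} from hp)]
    rw [heq]
    exact h1.indicator hS
  have hFint : Integrable (Function.uncurry F) (μ.prod ν) := by
    refine Integrable.mono' (g := fun p : ℝ × ℝ => (a^2)⁻¹ * |w p.2|) ?_ hFmeas ?_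
    · exact Integrable.mul_prod (integrable_const (μ := μ) _) hwb.abs
    · rw [hμ, hν, Measure.prod_restrict]
      filter_upwards [ae_restrict_mem (measurableSet_Ioo.prod measurableSet_Ioo)] with p hp
      obtain ⟨hp1, _hp2⟩ := hp
      have ha1 : a < p.1 := hp1.1
      have hnorm : ‖Function.uncurry F p‖ = |(Ioo (0:ℝ) p.1).indicator w p.2| * |(p.1^2)⁻¹| := by
        simp only [Function.uncurry, hFdef]
        rw [Real.norm_eq_abs, abs_mul]
      rw [hnorm]
      calc |(Ioo (0:ℝ) p.1).indicator w p.2| * |(p.1^2)⁻¹|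
          ≤ |w p.2| * (a^2)⁻¹ := by
            refine mul_le_mul ?_ ?_ (abs_nonneg _) (abs_nonneg _)
            · have := norm_indicator_le_norm_self (s := Ioo (0:ℝ) p.1) (f := w) (a := p.2)
              simpa [Real.norm_eq_abs] using this
            · rw [abs_of_nonneg (by positivity)]
              exact inv_anti₀ (by positivity) (by nlinarith)
        _ = (a^2)⁻¹ * |w p.2| := mul_comm _ _
  have hswap := MeasureTheory.integral_integral_swap hFint
  -- evaluate the LHS of the swap
  have hLHS : (∫ s, ∫ u, F s u ∂ν ∂μ) = ∫ s in Ioo a b, Pav w s * s⁻¹ := by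
    rw [hμ]
    refine setIntegral_congr_fun measurableSet_Ioo ?_
    intro s hs
    show (∫ u, F s u ∂ν) = Pav w s * s⁻¹
    have hs0 : 0 < s := ha.trans hs.1
    have hinner : (∫ u, F s u ∂ν) = (∫ u in Ioo (0:ℝ) s, w u) * (s^2)⁻¹ := by
      rw [hν, hFdef]
      simp only
      rw [MeasureTheory.integral_mul_const, setIntegral_indicator measurableSet_Ioo,
        Set.Ioo_inter_Ioo]
      norm_num [min_eq_right hs.2.le]
    rw [hinner]
    have hP : Pav w s = (1/s) * ∫ u in Ioo (0:ℝ) s, w u := rfl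
    rw [hP, sq s, mul_inv]
    ring
  -- evaluate the RHS of the swap
  have hRHS : (∫ u, ∫ s, F s u ∂μ ∂ν) = ∫ u in Ioo (0:ℝ) b, w u * ((max a u)⁻¹ - b⁻¹) := by
    rw [hν]
    refine setIntegral_congr_fun measurableSet_Ioo ?_
    intro u hu
    show (∫ s, F s u ∂μ) = w u * ((max a u)⁻¹ - b⁻¹)
    have hu0 : 0 < u := hu.1
    have hmax : 0 < max a u := lt_max_of_lt_left ha
    have hmaxb : max a u ≤ b := max_le hab.le hu.2.le
    have hcong : (fun s => F s u) = fun s => (Ioi u).indicator (fun s => w u * (s^2)⁻¹) s := by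
      funext s
      by_cases hsu : u < s
      · rw [Set.indicator_of_mem (show s ∈ Ioi u from hsu)]
        simp only [hFdef]
        rw [Set.indicator_of_mem (show u ∈ Ioo 0 s from ⟨hu0, hsu⟩)]
      · rw [Set.indicator_of_notMem (show s ∉ Ioi u by simpa using hsu)]
        simp only [hFdef]
        rw [Set.indicator_of_notMem (show u ∉ Ioo 0 s from fun h => hsu h.2), zero_mul]
    rw [hμ, hcong, setIntegral_indicator measurableSet_Ioi, Set.Ioo_inter_Ioi,
      MeasureTheory.integral_const_mul, integral_inv_sq_Ioo' hmax hmaxb]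
  have hI : ∫ s in Ioo a b, Pav w s * s⁻¹
      = ∫ u in Ioo (0:ℝ) b, w u * ((max a u)⁻¹ - b⁻¹) := by
    rw [← hLHS, hswap, hRHS]
  -- integrability of the pieces
  have hwinv : IntegrableOn (fun u => w u * u⁻¹) (Ioo a b) := by
    refine Integrable.mono' (hwab.abs.mul_const a⁻¹)
      (hwab.aestronglyMeasurable.mul measurable_inv.aestronglyMeasurable) ?_
    filter_upwards [ae_restrict_mem measurableSet_Ioo] with u hu
    have hu0 : 0 < u := ha.trans hu.1
    rw [Real.norm_eq_abs, abs_mul, abs_inv, abs_of_pos hu0]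
    exact mul_le_mul_of_nonneg_left (inv_anti₀ ha hu.1.le) (abs_nonneg _)
  have hPavinv : IntegrableOn (fun s => Pav w s * s⁻¹) (Ioo a b) := by
    refine Integrable.mono' ((hwab.abs.add (integrable_const C)).mul_const a⁻¹)
      (hPavMeas.mul measurable_inv.aestronglyMeasurable) ?_
    filter_upwards [ae_restrict_mem measurableSet_Ioo] with s hs
    have hs0 : 0 < s := ha.trans hs.1
    have h1 := hW s hs0
    have h2 : |Pav w s| ≤ |w s| + C := by
      have : |Pav w s| ≤ |w s| + |Pav w s - w s| := by
        calc |Pav w s| = |w s + (Pav w s - w s)| := by ring_nf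
          _ ≤ |w s| + |Pav w s - w s| := abs_add_le _ _
      linarith
    rw [Real.norm_eq_abs, abs_mul, abs_inv, abs_of_pos hs0]
    exact mul_le_mul h2 (inv_anti₀ ha hs.1.le) (inv_nonneg.2 hs0.le) (add_nonneg (abs_nonneg _) hC0)
  have hfInt : IntegrableOn (fun s => (w s - Pav w s) * s⁻¹) (Ioo a b) := by
    refine (hwinv.sub hPavinv).congr ?_
    exact Filter.Eventually.of_forall fun s => by simp [Pi.sub_apply]; ring
  have hsub : ∫ s in Ioo a b, (w s - Pav w s) * s⁻¹
      = (∫ s in Ioo a b, w s * s⁻¹) - ∫ s in Ioo a b, Pav w s * s⁻¹ := by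
    rw [← integral_sub hwinv hPavinv]
    exact setIntegral_congr_fun measurableSet_Ioo fun s _ => by ring
  -- split the RHS integral
  set g : ℝ → ℝ := fun u => w u * ((max a u)⁻¹ - b⁻¹) with hgdef
  have hgmeas : Measurable fun u : ℝ => (max a u)⁻¹ - b⁻¹ :=
    ((measurable_const.max measurable_id).inv).sub measurable_const
  have hgInt : IntegrableOn g (Ioo (0:ℝ) b) := by
    refine Integrable.mono' (hwb.abs.mul_const a⁻¹)
      (hwb.aestronglyMeasurable.mul hgmeas.aestronglyMeasurable) ?_
    filter_upwards [ae_restrict_mem measurableSet_Ioo] with u hu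
    rw [Real.norm_eq_abs, hgdef]
    simp only
    rw [abs_mul]
    refine mul_le_mul_of_nonneg_left ?_ (abs_nonneg _)
    have h1 : 0 < max a u := lt_max_of_lt_left ha
    have h2 : (max a u)⁻¹ ≤ a⁻¹ := inv_anti₀ ha (le_max_left _ _)
    have h3 : 0 < b⁻¹ := inv_pos.2 hb
    have h4 : b⁻¹ ≤ (max a u)⁻¹ := inv_anti₀ h1 (max_le hab.le hu.2.le)
    rw [abs_of_nonneg (by linarith)]
    linarith
  have hg1 : IntegrableOn g (Ioc (0:ℝ) a) := by
    refine IntegrableOn.congr_set_ae ?_ Ioo_ae_eq_Ioc.symm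
    exact hgInt.mono_set fun x hx => ⟨hx.1, hx.2.trans hab⟩
  have hg2 : IntegrableOn g (Ioc a b) := by
    refine IntegrableOn.congr_set_ae ?_ Ioo_ae_eq_Ioc.symm
    exact hgInt.mono_set fun x hx => ⟨ha.trans hx.1, hx.2⟩
  have hgsplit : ∫ u in Ioo (0:ℝ) b, g u
      = (∫ u in Ioc (0:ℝ) a, g u) + ∫ u in Ioc a b, g u := by
    rw [← integral_Ioc_eq_integral_Ioo, ← Ioc_union_Ioc_eq_Ioc ha.le hab.le,
      setIntegral_union (Ioc_disjoint_Ioc_of_le le_rfl) measurableSet_Ioc hg1 hg2]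
  have hpart1 : ∫ u in Ioc (0:ℝ) a, g u = G a * (a⁻¹ - b⁻¹) := by
    have e : ∫ u in Ioc (0:ℝ) a, g u = ∫ u in Ioc (0:ℝ) a, w u * (a⁻¹ - b⁻¹) := by
      refine setIntegral_congr_fun measurableSet_Ioc fun u hu => ?_
      simp only [hgdef]
      rw [max_eq_left hu.2]
    rw [e, MeasureTheory.integral_mul_const, integral_Ioc_eq_integral_Ioo]
  have hpart2 : ∫ u in Ioc a b, g u
      = (∫ u in Ioo a b, w u * u⁻¹) - (∫ u in Ioo a b, w u) * b⁻¹ := by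
    have e1 : ∫ u in Ioc a b, g u = ∫ u in Ioo a b, g u := integral_Ioc_eq_integral_Ioo
    have e2 : ∫ u in Ioo a b, g u = ∫ u in Ioo a b, (w u * u⁻¹ - w u * b⁻¹) := by
      refine setIntegral_congr_fun measurableSet_Ioo fun u hu => ?_
      simp only [hgdef]
      rw [max_eq_right hu.1.le]
      ring
    rw [e1, e2, integral_sub hwinv (hwab.mul_const _), MeasureTheory.integral_mul_const]
  -- additivity of the primitive
  have hwIoc1 : IntegrableOn w (Ioc (0:ℝ) a) :=
    IntegrableOn.congr_set_ae (hInt a ha) Ioo_ae_eq_Ioc.symm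
  have hwIoc2 : IntegrableOn w (Ioc a b) :=
    IntegrableOn.congr_set_ae hwab Ioo_ae_eq_Ioc.symm
  have hGadd : G b = G a + ∫ u in Ioo a b, w u := by
    calc G b = ∫ u in Ioc (0:ℝ) b, w u := (integral_Ioc_eq_integral_Ioo (f := w)).symm
      _ = (∫ u in Ioc (0:ℝ) a, w u) + ∫ u in Ioc a b, w u := by
          rw [← Ioc_union_Ioc_eq_Ioc ha.le hab.le,
            setIntegral_union (Ioc_disjoint_Ioc_of_le le_rfl) measurableSet_Ioc hwIoc1 hwIoc2]
      _ = G a + ∫ u in Ioo a b, w u := by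
          rw [integral_Ioc_eq_integral_Ioo, integral_Ioc_eq_integral_Ioo]
  -- the key identity
  have hkey : Pav w b - Pav w a = ∫ s in Ioo a b, (w s - Pav w s) * s⁻¹ := by
    rw [hsub, hI, hgsplit, hpart1, hpart2]
    have hPb : Pav w b = (1/b) * G b := rfl
    have hPa : Pav w a = (1/a) * G a := rfl
    rw [hPb, hPa, hGadd]
    have hane : a ≠ 0 := ne_of_gt ha
    have hbne : b ≠ 0 := ne_of_gt hb
    field_simp
    ring
  -- final bound
  have hCinv : IntegrableOn (fun s : ℝ => C * s⁻¹) (Ioo a b) := by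
    have hcont : ContinuousOn (fun s : ℝ => C * s⁻¹) (Icc a b) :=
      continuousOn_const.mul
        (continuousOn_id.inv₀ fun x hx => ne_of_gt (lt_of_lt_of_le ha hx.1))
    exact (hcont.integrableOn_Icc).mono_set Ioo_subset_Icc_self
  have habs : |Pav w b - Pav w a| ≤ ∫ s in Ioo a b, C * s⁻¹ := by
    rw [hkey]
    calc |∫ s in Ioo a b, (w s - Pav w s) * s⁻¹|
        ≤ ∫ s in Ioo a b, ‖(w s - Pav w s) * s⁻¹‖ := by
          rw [← Real.norm_eq_abs]
          exact norm_integral_le_integral_norm _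
      _ ≤ ∫ s in Ioo a b, C * s⁻¹ := by
          refine setIntegral_mono_on hfInt.norm hCinv measurableSet_Ioo fun s hs => ?_
          have hs0 : 0 < s := ha.trans hs.1
          rw [Real.norm_eq_abs, abs_mul, abs_inv, abs_of_pos hs0]
          refine mul_le_mul_of_nonneg_right ?_ (inv_nonneg.2 hs0.le)
          rw [abs_sub_comm]
          exact hW s hs0
  have hClog : ∫ s in Ioo a b, C * s⁻¹ = C * (Real.log b - Real.log a) := by
    rw [MeasureTheory.integral_const_mul]
    have e : ∫ s in Ioo a b, s⁻¹ = ∫ s in a..b, s⁻¹ := by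
      rw [intervalIntegral.integral_of_le hab.le, integral_Ioc_eq_integral_Ioo]
    rw [e, integral_inv_of_pos ha hb, Real.log_div (ne_of_gt hb) (ne_of_gt ha)]
  linarith [habs, hClog.le, hClog.ge]

/-- If `‖w‖_W ≤ C` then `Pw` has at most logarithmic growth:
`|Pw(t) − Pw(1)| ≤ C|log t|`, hence `|Pw(t)| ≤ |Pw(1)| + C(1 + |log t|)`. -/
theorem Pw_log_growth (w : ℝ → ℝ) (C : ℝ)
    (hInt : ∀ t > (0 : ℝ), IntegrableOn w (Ioo 0 t))
    (hW : ∀ t > (0 : ℝ), |Pav w t - w t| ≤ C) :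
    ∀ t > (0 : ℝ),
      |Pav w t - Pav w 1| ≤ C * |Real.log t| ∧
      |Pav w t| ≤ |Pav w 1| + C * (1 + |Real.log t|) := by

  have hC0 : 0 ≤ C := le_trans (abs_nonneg _) (hW 1 one_pos)
  intro t ht
  have h1 : |Pav w t - Pav w 1| ≤ C * |Real.log t| := by
    rcases lt_trichotomy t 1 with h | h | h
    · have hk := Pav_key w C hInt hW ht h
      rw [abs_sub_comm]
      have hlog : Real.log t < 0 := Real.log_neg ht h
      rw [abs_of_neg hlog]
      simpa [Real.log_one] using hk
    · subst h; simp
    · have hk := Pav_key w C hInt hW one_pos h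
      have hlog : 0 ≤ Real.log t := Real.log_nonneg h.le
      rw [abs_of_nonneg hlog]
      simpa [Real.log_one] using hk
  refine ⟨h1, ?_⟩
  have h2 : |Pav w t| ≤ |Pav w 1| + |Pav w t - Pav w 1| := by
    calc |Pav w t| = |Pav w 1 + (Pav w t - Pav w 1)| := by ring_nf
      _ ≤ |Pav w 1| + |Pav w t - Pav w 1| := abs_add_le _ _
  have h3 : C * |Real.log t| ≤ C * (1 + |Real.log t|) := by nlinarith [abs_nonneg (Real.log t)]
  linarith
end

section
/- Let w : (0,∞) → ℝ be integrable on (0,t) for every t > 0 with ‖w‖_W := sup_{t>0} |Pw(t) − w(t)| < ∞, and let 0 < θ < 1. Then t^θ·w(t) → 0 as t → 0⁺ and t^{−θ}·w(t) → 0 as t → ∞. -/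
open MeasureTheory Set Real Filter
set_option maxHeartbeats 1000000

lemma integral_inv_sq {a b : ℝ} (ha : 0 < a) (hab : a ≤ b) :
    ∫ u in Ioo a b, (u ^ 2)⁻¹ = a⁻¹ - b⁻¹ := by
  rw [← integral_Ioc_eq_integral_Ioo, ← intervalIntegral.integral_of_le hab]
  have h : ∫ u in a..b, (u ^ 2)⁻¹ = -b⁻¹ - -a⁻¹ := by
    apply intervalIntegral.integral_eq_sub_of_hasDerivAt (f := fun x => -x⁻¹)
    · intro x hx
      rw [uIcc_of_le hab] at hx
      have hx0 : x ≠ 0 := ne_of_gt (lt_of_lt_of_le ha hx.1)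
      have h := (hasDerivAt_inv hx0).neg
      rw [neg_neg] at h
      exact h
    · apply ContinuousOn.intervalIntegrable
      apply ContinuousOn.inv₀ (by fun_prop)
      intro x hx
      rw [uIcc_of_le hab] at hx
      exact pow_ne_zero 2 (ne_of_gt (lt_of_lt_of_le ha hx.1))
  rw [h]; ring

lemma integral_inv_Ioo {a b : ℝ} (ha : 0 < a) (hab : a ≤ b) :
    ∫ u in Ioo a b, u⁻¹ = Real.log (b / a) := by
  rw [← integral_Ioc_eq_integral_Ioo, ← intervalIntegral.integral_of_le hab]
  exact integral_inv_of_pos ha (lt_of_lt_of_le ha hab)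

lemma key (g : ℝ → ℝ) (hg : StronglyMeasurable g) (C : ℝ)
    (hInt : ∀ t > (0:ℝ), IntegrableOn g (Ioo 0 t))
    (hC : ∀ᵐ u ∂(volume.restrict (Ioi (0:ℝ))), |Pav g u - g u| ≤ C)
    {s t : ℝ} (hs : 0 < s) (hst : s < t) :
    |Pav g t - Pav g s| ≤ C * Real.log (t / s) := by
  have ht : 0 < t := hs.trans hst
  set F : ℝ → ℝ := fun u => ∫ r in Ioo 0 u, g r with hF
  -- decomposition
  have hFdecomp : ∀ u, s ≤ u → u ≤ t → F u = F s + ∫ r in Ioo s u, g r := by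
    intro u hsu hut
    have h1 : IntegrableOn g (Ioo 0 s) :=
      (hInt t ht).mono_set (Ioo_subset_Ioo le_rfl (hst.le))
    have h2 : IntegrableOn g (Ico s u) := by
      apply (hInt t ht).mono_set
      intro r hr
      exact ⟨hs.trans_le hr.1, lt_of_lt_of_le hr.2 hut⟩
    have hdisj : Disjoint (Ioo (0:ℝ) s) (Ico s u) := by
      rw [Set.disjoint_left]
      rintro r ⟨_, hr2⟩ ⟨hr3, _⟩
      exact absurd hr3 (not_le.mpr hr2)
    have hun : Ioo (0:ℝ) s ∪ Ico s u = Ioo 0 u := Ioo_union_Ico_eq_Ioo hs hsu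
    simp only [hF]
    rw [← hun, setIntegral_union hdisj measurableSet_Ico h1 h2, integral_Ico_eq_integral_Ioo]
  -- integrability on Ioo s t
  have hg1 : IntegrableOn g (Ioo s t) :=
    (hInt t ht).mono_set (Ioo_subset_Ioo hs.le le_rfl)
  have hgIcc : IntegrableOn g (Icc s t) := by
    apply (hInt (t+1) (by linarith)).mono_set
    intro r hr; exact ⟨hs.trans_le hr.1, by linarith [hr.2]⟩
  have hFcont : ContinuousOn F (Icc s t) := by
    have h1 : ContinuousOn (fun u => ∫ r in Ioc s u, g r) (Icc s t) :=
      intervalIntegral.continuousOn_primitive hgIcc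
    have : ∀ u ∈ Icc s t, F u = F s + ∫ r in Ioc s u, g r := by
      intro u hu
      rw [hFdecomp u hu.1 hu.2, integral_Ioc_eq_integral_Ioo]
    exact (continuousOn_const.add h1).congr this
  have husq : ContinuousOn (fun u : ℝ => (u^2)⁻¹) (Icc s t) := by
    apply ContinuousOn.inv₀ (by fun_prop)
    intro x hx; exact pow_ne_zero 2 (ne_of_gt (hs.trans_le hx.1))
  have h2int : IntegrableOn (fun u => F u / u^2) (Ioo s t) := by
    apply ((hFcont.div (by fun_prop) ?_).integrableOn_Icc).mono_set Ioo_subset_Icc_self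
    intro x hx; exact pow_ne_zero 2 (ne_of_gt (hs.trans_le hx.1))
  have h3int : IntegrableOn (fun u => g u / u) (Ioo s t) := by
    apply Integrable.mono' (hg1.abs.div_const s)
      ((hg.measurable.div measurable_id).aestronglyMeasurable)
    filter_upwards [ae_restrict_mem measurableSet_Ioo] with u hu
    simp only [Pi.div_apply, id_eq]
    rw [Real.norm_eq_abs, abs_div, abs_of_pos (hs.trans hu.1)]
    exact div_le_div_of_nonneg_left (abs_nonneg _) hs hu.1.le
  -- Fubini setup
  set f : ℝ → ℝ → ℝ := fun u r => (Iio u).indicator g r / u ^ 2 with hf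
  have hm : Measurable (Function.uncurry f) := by
    have he : Function.uncurry f = fun p : ℝ × ℝ => (if p.2 < p.1 then g p.2 else 0) / p.1 ^ 2 := by
      ext p; simp [Function.uncurry, hf, indicator_apply]
    rw [he]
    exact (Measurable.ite (measurableSet_lt measurable_snd measurable_fst)
      (hg.measurable.comp measurable_snd) measurable_const).div
      (measurable_fst.pow_const 2)
  set μ := volume.restrict (Ioo s t) with hμ
  have hfub : Integrable (Function.uncurry f) (μ.prod μ) := by
    rw [integrable_prod_iff hm.aestronglyMeasurable]
    constructor
    · filter_upwards [ae_restrict_mem measurableSet_Ioo] with u hu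
      show Integrable (fun r => (Iio u).indicator g r / u ^ 2) μ
      exact (hg1.indicator measurableSet_Iio).div_const _
    · apply Integrable.mono' (integrable_const ((∫ r in Ioo s t, |g r|) / s ^ 2))
        (hm.aestronglyMeasurable.norm.integral_prod_right')
      filter_upwards [ae_restrict_mem measurableSet_Ioo] with u hu
      have hb : ∀ r, ‖f u r‖ ≤ |g r| / s ^ 2 := by
        intro r
        rw [Real.norm_eq_abs, abs_div, abs_of_pos (pow_pos (hs.trans hu.1) 2)]
        apply div_le_div₀ (abs_nonneg _) _ (pow_pos hs 2) (pow_le_pow_left₀ hs.le hu.1.le 2)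
        simpa [Real.norm_eq_abs] using norm_indicator_le_norm_self g r (s := Iio u)
      show ‖∫ r, ‖Function.uncurry f (u, r)‖ ∂μ‖ ≤ (∫ r in Ioo s t, |g r|) / s ^ 2
      rw [Real.norm_eq_abs, abs_of_nonneg (integral_nonneg fun r => norm_nonneg _)]
      calc ∫ r, ‖Function.uncurry f (u, r)‖ ∂μ ≤ ∫ r in Ioo s t, |g r| / s ^ 2 := by
            apply integral_mono_ae ((hg1.indicator measurableSet_Iio).div_const _).norm
              (hg1.abs.div_const _) (ae_of_all _ hb)
        _ = (∫ r in Ioo s t, |g r|) / s ^ 2 := integral_div _ _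
  -- inner integral rewrite (before swap)
  have hinner : ∀ u ∈ Ioo s t, (∫ r in Ioo s u, g r) / u ^ 2 = ∫ r in Ioo s t, f u r := by
    intro u hu
    have h1 : ∫ r in Ioo s t, f u r = (∫ r in Ioo s t, (Iio u).indicator g r) / u ^ 2 :=
      integral_div _ _
    rw [h1, setIntegral_indicator measurableSet_Iio]
    have h2 : Ioo s t ∩ Iio u = Ioo s u := by
      ext r
      exact ⟨fun ⟨⟨a, _⟩, c⟩ => ⟨a, c⟩, fun ⟨a, c⟩ => ⟨⟨a, c.trans hu.2⟩, c⟩⟩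
    rw [h2]
  -- inner integral after swap
  have hinner2 : ∀ r ∈ Ioo s t, (∫ u in Ioo s t, f u r) = g r * (r⁻¹ - t⁻¹) := by
    intro r hr
    have h1 : ∀ u : ℝ, f u r = (Ioi r).indicator (fun u => g r / u ^ 2) u := by
      intro u
      simp only [hf, indicator_apply, mem_Iio, mem_Ioi]
      split_ifs <;> simp
    simp_rw [h1]
    rw [setIntegral_indicator measurableSet_Ioi]
    have h2 : Ioo s t ∩ Ioi r = Ioo r t := by
      ext u
      exact ⟨fun ⟨⟨_, b⟩, c⟩ => ⟨c, b⟩, fun ⟨c, b⟩ => ⟨⟨hr.1.trans c, b⟩, c⟩⟩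
    rw [h2]
    simp_rw [div_eq_mul_inv]
    rw [integral_const_mul, integral_inv_sq (hs.trans hr.1) hr.2.le]
  -- the key identity
  have hB : Integrable (fun u => ∫ r in Ioo s t, f u r) μ := hfub.integral_prod_left
  have hA : IntegrableOn (fun u => F s * (u ^ 2)⁻¹) (Ioo s t) :=
    ((continuousOn_const.mul husq).integrableOn_Icc).mono_set Ioo_subset_Icc_self
  have hid : ∫ u in Ioo s t, (Pav g u - g u) / u = Pav g s - Pav g t := by
    have e1 : ∀ u ∈ Ioo s t,
        (Pav g u - g u) / u = (F s * (u ^ 2)⁻¹ + ∫ r in Ioo s t, f u r) - g u / u := by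
      intro u hu
      have hu0 : (0:ℝ) < u := hs.trans hu.1
      rw [← hinner u hu]
      show (Pav g u - g u) / u = F s * (u ^ 2)⁻¹ + (∫ r in Ioo s u, g r) / u ^ 2 - g u / u
      have hPav : Pav g u = (1 / u) * F u := rfl
      rw [hPav, hFdecomp u hu.1.le hu.2.le]
      field_simp
    rw [setIntegral_congr_fun measurableSet_Ioo e1]
    rw [integral_sub (f := fun u => F s * (u ^ 2)⁻¹ + ∫ r in Ioo s t, f u r)
      (g := fun u => g u / u) (hA.add hB) h3int,
      integral_add (f := fun u => F s * (u ^ 2)⁻¹) (g := fun u => ∫ r in Ioo s t, f u r) hA hB]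
    rw [integral_const_mul, integral_inv_sq hs hst.le]
    rw [integral_integral_swap hfub]
    rw [setIntegral_congr_fun measurableSet_Ioo hinner2]
    have e2 : ∀ r ∈ Ioo s t, g r * (r⁻¹ - t⁻¹) = g r / r - g r / t := by
      intro r hr; rw [mul_sub, div_eq_mul_inv, div_eq_mul_inv]
    rw [setIntegral_congr_fun measurableSet_Ioo e2]
    rw [integral_sub h3int (hg1.div_const t), integral_div]
    have hPs : Pav g s = (1 / s) * F s := rfl
    have hPt : Pav g t = (1 / t) * F t := rfl
    rw [hPs, hPt, hFdecomp t hst.le le_rfl]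
    field_simp
    ring
  -- final estimate
  have hCub : IntegrableOn (fun u => C * u⁻¹) (Ioo s t) := by
    apply (ContinuousOn.integrableOn_Icc _).mono_set Ioo_subset_Icc_self
    exact continuousOn_const.mul (ContinuousOn.inv₀ (by fun_prop)
      fun x hx => ne_of_gt (hs.trans_le hx.1))
  have hbound : ‖∫ u in Ioo s t, (Pav g u - g u) / u‖ ≤ ∫ u in Ioo s t, C * u⁻¹ := by
    apply norm_integral_le_of_norm_le hCub
    have hC' := ae_restrict_of_ae_restrict_of_subset
      (fun x (hx : x ∈ Ioo s t) => hs.trans hx.1) hC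
    filter_upwards [ae_restrict_mem measurableSet_Ioo, hC'] with u hu hCu
    have hu0 : (0:ℝ) < u := hs.trans hu.1
    rw [Real.norm_eq_abs, abs_div, abs_of_pos hu0, ← div_eq_mul_inv _ u]
    gcongr
  rw [hid, Real.norm_eq_abs, abs_sub_comm] at hbound
  calc |Pav g t - Pav g s| ≤ ∫ u in Ioo s t, C * u⁻¹ := hbound
    _ = C * Real.log (t / s) := by rw [integral_const_mul, integral_inv_Ioo hs hst.le]

/-- If `w ∈ W` and `0 < θ < 1`, then `t^θ w(t) → 0` as `t → 0⁺`
and `t^{−θ} w(t) → 0` as `t → ∞`. -/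
theorem w_power_decay (w : ℝ → ℝ) (C θ : ℝ) (hθ0 : 0 < θ) (hθ1 : θ < 1)
    (hInt : ∀ t > (0 : ℝ), IntegrableOn w (Ioo 0 t))
    (hW : ∀ t > (0 : ℝ), |Pav w t - w t| ≤ C) :
    Tendsto (fun t : ℝ => t ^ θ * w t) (nhdsWithin 0 (Ioi 0)) (nhds 0) ∧
    Tendsto (fun t : ℝ => t ^ (-θ) * w t) atTop (nhds 0) := by
  have hC0 : 0 ≤ C := (abs_nonneg _).trans (hW 1 one_pos)
  -- measurable representative
  have hUnion : Ioi (0:ℝ) = ⋃ n : ℕ, Ioo (0:ℝ) ((n:ℝ)+1) := by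
    ext x; simp only [mem_Ioi, mem_iUnion, mem_Ioo]
    constructor
    · intro hx; obtain ⟨n, hn⟩ := exists_nat_gt x; exact ⟨n, hx, by push_cast; linarith⟩
    · rintro ⟨n, hn, -⟩; exact hn
  have hAesm : AEStronglyMeasurable w (volume.restrict (Ioi (0:ℝ))) := by
    rw [hUnion, aestronglyMeasurable_iUnion_iff]
    intro n
    exact (hInt ((n:ℝ)+1) (by positivity)).aestronglyMeasurable
  set g : ℝ → ℝ := hAesm.mk w with hgdef
  have hgsm : StronglyMeasurable g := hAesm.stronglyMeasurable_mk
  have hwg : w =ᵐ[volume.restrict (Ioi (0:ℝ))] g := hAesm.ae_eq_mk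
  have hPavEq : ∀ u : ℝ, Pav w u = Pav g u := by
    intro u
    unfold Pav
    congr 1
    exact integral_congr_ae (ae_restrict_of_ae_restrict_of_subset Ioo_subset_Ioi_self hwg)
  have hIntg : ∀ t > (0:ℝ), IntegrableOn g (Ioo 0 t) := fun t ht =>
    (hInt t ht).congr (ae_restrict_of_ae_restrict_of_subset Ioo_subset_Ioi_self hwg)
  have hCg : ∀ᵐ u ∂(volume.restrict (Ioi (0:ℝ))), |Pav g u - g u| ≤ C := by
    filter_upwards [hwg, ae_restrict_mem measurableSet_Ioi] with u hu hu0
    rw [← hu, ← hPavEq]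
    exact hW u hu0
  -- logarithmic bound on the averages
  have hB : ∀ u : ℝ, 0 < u → |Pav w u| ≤ |Pav w 1| + C * |Real.log u| := by
    intro u hu
    have htri : ∀ a b : ℝ, |a| ≤ |b| + |a - b| := by
      intro a b
      calc |a| = |(a - b) + b| := by congr 1; ring
        _ ≤ |a - b| + |b| := abs_add_le _ _
        _ = |b| + |a - b| := by ring
    rcases lt_trichotomy u 1 with h1 | h1 | h1
    · have hk := key g hgsm C hIntg hCg hu h1
      have hlog : Real.log (1 / u) = -Real.log u := by rw [one_div, Real.log_inv]
      rw [hlog] at hk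
      have habs : |Real.log u| = -Real.log u := abs_of_neg (Real.log_neg hu h1)
      rw [habs, hPavEq u, hPavEq 1]
      have := htri (Pav g u) (Pav g 1)
      rw [abs_sub_comm] at this
      linarith
    · subst h1; simp [hC0]
    · have hk := key g hgsm C hIntg hCg one_pos h1
      rw [div_one] at hk
      have habs : |Real.log u| = Real.log u := abs_of_nonneg (Real.log_nonneg h1.le)
      rw [habs, hPavEq u, hPavEq 1]
      have := htri (Pav g u) (Pav g 1)
      linarith
  set K := |Pav w 1| + C with hK
  have hwbd : ∀ u : ℝ, 0 < u → |w u| ≤ K + C * |Real.log u| := by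
    intro u hu
    have h1 := hW u hu
    have h2 := hB u hu
    have h3 : |w u| ≤ |Pav w u - w u| + |Pav w u| := by
      calc |w u| = |(w u - Pav w u) + Pav w u| := by congr 1; ring
        _ ≤ |w u - Pav w u| + |Pav w u| := abs_add_le _ _
        _ = |Pav w u - w u| + |Pav w u| := by rw [abs_sub_comm]
    rw [hK]; linarith
  have hrpow0 : Tendsto (fun t : ℝ => t ^ θ) (nhdsWithin 0 (Ioi 0)) (nhds 0) := by
    have hca : ContinuousAt (fun t : ℝ => t ^ θ) 0 :=
      Real.continuousAt_rpow_const 0 θ (Or.inr hθ0.le)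
    have h0 : (0:ℝ) ^ θ = 0 := Real.zero_rpow hθ0.ne'
    simpa [h0] using hca.tendsto.mono_left nhdsWithin_le_nhds
  constructor
  · apply squeeze_zero_norm' (a := fun t : ℝ => K * t ^ θ + C * |Real.log t * t ^ θ|) (f := fun t : ℝ => t ^ θ * w t)
    · filter_upwards [self_mem_nhdsWithin] with t (ht : t ∈ Ioi 0)
      have htp : (0:ℝ) < t := ht
      have h1 : 0 ≤ t ^ θ := Real.rpow_nonneg htp.le θ
      rw [Real.norm_eq_abs, abs_mul, abs_of_nonneg h1, abs_mul, abs_of_nonneg h1]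
      calc t ^ θ * |w t| ≤ t ^ θ * (K + C * |Real.log t|) :=
            mul_le_mul_of_nonneg_left (hwbd t htp) h1
        _ = K * t ^ θ + C * (|Real.log t| * t ^ θ) := by ring
    · have h2 := (tendsto_log_mul_rpow_nhdsGT_zero hθ0).abs
      simpa using (hrpow0.const_mul K).add (h2.const_mul C)
  · apply squeeze_zero_norm' (a := fun t : ℝ => K * t ^ (-θ) + C * (Real.log t / t ^ θ)) (f := fun t : ℝ => t ^ (-θ) * w t)
    · filter_upwards [eventually_ge_atTop (1:ℝ)] with t ht
      have htp : (0:ℝ) < t := lt_of_lt_of_le one_pos ht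
      have h1 : 0 ≤ t ^ (-θ) := Real.rpow_nonneg htp.le _
      rw [Real.norm_eq_abs, abs_mul, abs_of_nonneg h1]
      calc t ^ (-θ) * |w t| ≤ t ^ (-θ) * (K + C * |Real.log t|) :=
            mul_le_mul_of_nonneg_left (hwbd t htp) h1
        _ = K * t ^ (-θ) + C * (Real.log t * t ^ (-θ)) := by
            rw [abs_of_nonneg (Real.log_nonneg ht)]; ring
        _ = K * t ^ (-θ) + C * (Real.log t / t ^ θ) := by
            rw [Real.rpow_neg htp.le, div_eq_mul_inv]
    · have h2 : Tendsto (fun t : ℝ => Real.log t / t ^ θ) atTop (nhds 0) :=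
        (isLittleO_log_rpow_atTop hθ0).tendsto_div_nhds_zero
      simpa using ((tendsto_rpow_neg_atTop hθ0).const_mul K).add (h2.const_mul C)
end

section
/- Let w : (0,∞) → ℝ be differentiable on (0,∞) with |s·w′(s)| ≤ C for all s > 0. Then w is integrable on (0,t) for every t > 0 and |Pw(t) − w(t)| ≤ C for all t > 0; that is, w ∈ W with ‖w‖_W ≤ C. (In the notation of the paper: W₁ ⊂ W, where W₁ = {w : sup_s |s·w′(s)| < ∞}.) -/
open MeasureTheory Set Real Filter

/-- `log` is integrable on `(0, t)`. -/
lemma integrableOn_log_Ioo {t : ℝ} (ht : 0 < t) :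
    IntegrableOn Real.log (Ioo (0 : ℝ) t) := by
  have hrpow : IntegrableOn (fun s : ℝ => s ^ (-(1/2) : ℝ)) (Ioo (0 : ℝ) t) := by
    rw [intervalIntegral.integrableOn_Ioo_rpow_iff ht]; norm_num
  have hconst : IntegrableOn (fun _ : ℝ => |Real.log t|) (Ioo (0 : ℝ) t) :=
    integrableOn_const measure_Ioo_lt_top.ne
  refine ((hrpow.const_mul 2).add hconst).mono'
    (Real.measurable_log.aestronglyMeasurable) ?_
  filter_upwards [ae_restrict_mem measurableSet_Ioo] with x hx
  have hx0 : 0 < x := hx.1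
  have hxpow : 0 < x ^ (-(1/2) : ℝ) := Real.rpow_pos_of_pos hx0 _
  rcases le_or_gt x 1 with hx1 | hx1
  · have h1 : |Real.log x| = -Real.log x := by
      rw [abs_of_nonpos (Real.log_nonpos hx0.le hx1)]
    have h2 : -Real.log x ≤ 2 * x ^ (-(1/2) : ℝ) := by
      have : Real.log (x ^ (-(1/2) : ℝ)) ≤ x ^ (-(1/2) : ℝ) - 1 :=
        Real.log_le_sub_one_of_pos hxpow
      rw [Real.log_rpow hx0] at this
      nlinarith
    have hnn : (0:ℝ) ≤ |Real.log t| := abs_nonneg _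
    calc ‖Real.log x‖ = -Real.log x := h1
      _ ≤ 2 * x ^ (-(1/2) : ℝ) := h2
      _ ≤ 2 * x ^ (-(1/2) : ℝ) + |Real.log t| := by linarith
  · have h1 : |Real.log x| = Real.log x := abs_of_nonneg (Real.log_nonneg hx1.le)
    have h2 : Real.log x ≤ |Real.log t| :=
      le_trans (Real.log_le_log hx0 hx.2.le) (le_abs_self _)
    have : (0:ℝ) ≤ 2 * x ^ (-(1/2) : ℝ) := by positivity
    calc ‖Real.log x‖ = Real.log x := h1
      _ ≤ 2 * x ^ (-(1/2) : ℝ) + |Real.log t| := by linarith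

/-- `W₁ ⊂ W`: if `w` is differentiable on `(0,∞)` with `|s w'(s)| ≤ C`, then `w` is
integrable near the origin and `‖w‖_W ≤ C`. -/
theorem W1_subset_W (w w' : ℝ → ℝ) (C : ℝ)
    (hderiv : ∀ s ∈ Ioi (0 : ℝ), HasDerivWithinAt w (w' s) (Ioi 0) s)
    (hbound : ∀ s > (0 : ℝ), |s * w' s| ≤ C) :
    (∀ t > (0 : ℝ), IntegrableOn w (Ioo 0 t)) ∧
      ∀ t > (0 : ℝ), |Pav w t - w t| ≤ C := by
  have hC : 0 ≤ C := (abs_nonneg _).trans (hbound 1 one_pos)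
  have hD : ∀ x ∈ Ioi (0:ℝ), HasDerivAt w (w' x) x :=
    fun x hx => (hderiv x hx).hasDerivAt (isOpen_Ioi.mem_nhds hx)
  have hw'bd : ∀ x > (0:ℝ), |w' x| ≤ C / x := by
    intro x hx
    rw [le_div_iff₀ hx]
    calc |w' x| * x = |x * w' x| := by rw [abs_mul, abs_of_pos hx]; ring
      _ ≤ C := hbound x hx
  -- interval integrability of w'
  have hw'int : ∀ a b : ℝ, 0 < a → a ≤ b → IntervalIntegrable w' volume a b := by
    intro a b ha hab
    rw [intervalIntegrable_iff_integrableOn_Icc_of_le hab]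
    have hmeas : AEStronglyMeasurable w' (volume.restrict (Icc a b)) := by
      refine ((measurable_deriv w).aestronglyMeasurable
        (μ := volume.restrict (Icc a b))).congr ?_
      filter_upwards [ae_restrict_mem measurableSet_Icc] with x hx
      exact (hD x (lt_of_lt_of_le ha hx.1)).deriv
    refine (integrable_const (C / a)).mono' hmeas ?_
    filter_upwards [ae_restrict_mem measurableSet_Icc] with x hx
    have hx0 : 0 < x := lt_of_lt_of_le ha hx.1
    calc ‖w' x‖ = |w' x| := rfl
      _ ≤ C / x := hw'bd x hx0
      _ ≤ C / a := by gcongr; exact hx.1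
  -- key pointwise estimate
  have hdiff : ∀ a b : ℝ, 0 < a → a ≤ b →
      |w a - w b| ≤ C * (Real.log b - Real.log a) := by
    intro a b ha hab
    have hb : 0 < b := lt_of_lt_of_le ha hab
    have hftc : ∫ u in a..b, w' u = w b - w a :=
      intervalIntegral.integral_eq_sub_of_hasDerivAt
        (fun x hx => hD x (lt_of_lt_of_le ha (by rw [uIcc_of_le hab] at hx; exact hx.1)))
        (hw'int a b ha hab)
    have hcont : ContinuousOn (fun u : ℝ => C / u) (Set.uIcc a b) := by
      apply ContinuousOn.div continuousOn_const continuousOn_id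
      intro x hx
      rw [uIcc_of_le hab] at hx
      exact (lt_of_lt_of_le ha hx.1).ne'
    have hgint : IntervalIntegrable (fun u : ℝ => C / u) volume a b :=
      hcont.intervalIntegrable
    have hnorm : ‖∫ u in a..b, w' u‖ ≤ |∫ u in a..b, C / u| := by
      refine intervalIntegral.norm_integral_le_abs_of_norm_le ?_ hgint
      filter_upwards [ae_restrict_mem measurableSet_uIoc] with x hx
      rw [uIoc_of_le hab] at hx
      exact hw'bd x (lt_of_lt_of_le ha hx.1.le)
    have hcomp : (∫ u in a..b, C / u) = C * (Real.log b - Real.log a) := by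
      have h0 : (0:ℝ) ∉ Set.uIcc a b := by
        rw [uIcc_of_le hab]
        exact fun h => absurd h.1 (not_le.2 ha)
      simp_rw [div_eq_mul_inv]
      rw [intervalIntegral.integral_const_mul, integral_inv h0,
        Real.log_div hb.ne' ha.ne']
    have habs : |w a - w b| = ‖∫ u in a..b, w' u‖ := by
      rw [hftc]; rw [Real.norm_eq_abs, abs_sub_comm]
    rw [habs]
    calc ‖∫ u in a..b, w' u‖ ≤ |∫ u in a..b, C / u| := hnorm
      _ = |C * (Real.log b - Real.log a)| := by rw [hcomp]
      _ = C * (Real.log b - Real.log a) := by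
          rw [abs_of_nonneg]
          exact mul_nonneg hC (by simp [sub_nonneg, Real.log_le_log ha hab])
  have hwc : ContinuousOn w (Ioi (0:ℝ)) :=
    fun x hx => (hD x hx).continuousAt.continuousWithinAt
  -- integrability of w on (0, t)
  have hwint : ∀ t > (0:ℝ), IntegrableOn w (Ioo 0 t) := by
    intro t ht
    have hmeas : AEStronglyMeasurable w (volume.restrict (Ioo (0:ℝ) t)) :=
      (hwc.mono Ioo_subset_Ioi_self).aestronglyMeasurable measurableSet_Ioo
    have hconst : IntegrableOn (fun _ : ℝ => |w t| + C * Real.log t) (Ioo (0:ℝ) t) :=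
      integrableOn_const measure_Ioo_lt_top.ne
    refine (hconst.sub ((integrableOn_log_Ioo ht).const_mul C)).mono' hmeas ?_
    filter_upwards [ae_restrict_mem measurableSet_Ioo] with x hx
    have h1 : |w x - w t| ≤ C * (Real.log t - Real.log x) := hdiff x t hx.1 hx.2.le
    calc ‖w x‖ = |w x| := rfl
      _ ≤ |w x - w t| + |w t| := by
          have := abs_sub_abs_le_abs_sub (w x) (w t); linarith [abs_sub_abs_le_abs_sub (w x) (w t)]
      _ ≤ C * (Real.log t - Real.log x) + |w t| := by linarith
      _ = |w t| + C * Real.log t - C * Real.log x := by ring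
  refine ⟨hwint, fun t ht => ?_⟩
  have hwt_int := hwint t ht
  -- the majorant integral is at most C * t
  have hg_int : IntegrableOn (fun s => C * (Real.log t - Real.log s)) (Ioo (0:ℝ) t) := by
    have hconst : IntegrableOn (fun _ : ℝ => Real.log t) (Ioo (0:ℝ) t) :=
      integrableOn_const measure_Ioo_lt_top.ne
    exact (hconst.sub (integrableOn_log_Ioo ht)).const_mul C
  have hgle : (∫ s in Ioo (0:ℝ) t, C * (Real.log t - Real.log s)) ≤ C * t := by
    set S : ℕ → Set ℝ := fun n => Ioo (t / (n + 2)) t with hS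
    have hU : (⋃ n, S n) = Ioo (0:ℝ) t := by
      ext x
      simp only [hS, mem_iUnion, mem_Ioo]
      constructor
      · rintro ⟨n, h1, h2⟩
        exact ⟨lt_trans (by positivity) h1, h2⟩
      · rintro ⟨h1, h2⟩
        obtain ⟨n, hn⟩ := exists_nat_gt (t / x)
        refine ⟨n, ?_, h2⟩
        rw [div_lt_iff₀ (by positivity)]
        rw [div_lt_iff₀ h1] at hn
        nlinarith [h1, hn]
    have hmono : Monotone S := by
      intro m n hmn
      apply Ioo_subset_Ioo_left
      have : (m:ℝ) + 2 ≤ (n:ℝ) + 2 := by exact_mod_cast Nat.add_le_add_right hmn 2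
      gcongr
    have htend := tendsto_setIntegral_of_monotone (f := fun s => C * (Real.log t - Real.log s))
      (μ := volume) (fun n => measurableSet_Ioo) hmono (hU ▸ hg_int)
    rw [hU] at htend
    refine le_of_tendsto htend (Eventually.of_forall fun n => ?_)
    have ha : 0 < t / (n + 2) := by positivity
    have hat : t / (n + 2) < t := by
      rw [div_lt_iff₀ (by positivity)]
      nlinarith [ht]
    set a := t / (n + 2)
    have hlogint : IntervalIntegrable Real.log volume a t :=
      intervalIntegral.intervalIntegrable_log (by
        rw [uIcc_of_le hat.le]
        exact fun h => absurd h.1 (not_le.2 ha))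
    have hIoo : (∫ s in S n, C * (Real.log t - Real.log s))
        = ∫ s in a..t, C * (Real.log t - Real.log s) := by
      rw [intervalIntegral.integral_of_le hat.le, integral_Ioc_eq_integral_Ioo]
    rw [hIoo, intervalIntegral.integral_const_mul,
      intervalIntegral.integral_sub intervalIntegrable_const hlogint,
      intervalIntegral.integral_const, integral_log]
    have hla : Real.log a ≤ Real.log t := Real.log_le_log ha hat.le
    have : a * Real.log a ≤ a * Real.log t := by nlinarith
    have h2 : (t - a) • Real.log t - (t * Real.log t - a * Real.log a - t + a) ≤ t := by
      simp only [smul_eq_mul]; nlinarith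
    nlinarith [mul_le_mul_of_nonneg_left h2 hC]
  -- rewrite Pav w t - w t
  have hconst_int : IntegrableOn (fun _ : ℝ => w t) (Ioo (0:ℝ) t) :=
    integrableOn_const measure_Ioo_lt_top.ne
  have hsplit : Pav w t - w t = (1 / t) * ∫ s in Ioo (0:ℝ) t, (w s - w t) := by
    rw [integral_sub hwt_int hconst_int, setIntegral_const]
    have hvol : (volume (Ioo (0:ℝ) t)).toReal = t := by
      rw [Real.volume_Ioo, ENNReal.toReal_ofReal (by linarith)]
      ring
    rw [measureReal_def, hvol, Pav]
    field_simp
    rw [smul_eq_mul]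
  rw [hsplit, abs_mul]
  have habs2 : |∫ s in Ioo (0:ℝ) t, (w s - w t)| ≤ C * t := by
    calc |∫ s in Ioo (0:ℝ) t, (w s - w t)|
        ≤ ∫ s in Ioo (0:ℝ) t, |w s - w t| :=
          by simpa using norm_integral_le_integral_norm (fun s => w s - w t)
      _ ≤ ∫ s in Ioo (0:ℝ) t, C * (Real.log t - Real.log s) := by
          refine setIntegral_mono_on (hwt_int.sub hconst_int).abs hg_int measurableSet_Ioo ?_
          intro x hx
          exact hdiff x t hx.1 hx.2.le
      _ ≤ C * t := hgle
  have h1t : |1 / t| = 1 / t := abs_of_pos (by positivity)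
  rw [h1t]
  calc (1 / t) * |∫ s in Ioo (0:ℝ) t, (w s - w t)| ≤ (1 / t) * (C * t) := by
        apply mul_le_mul_of_nonneg_left habs2 (by positivity)
    _ = C := by field_simp
end

section
/- Let w : (0,∞) → ℝ be integrable on (0,t) for every t > 0 with ‖w‖_W := sup_{t>0} |Pw(t) − w(t)| ≤ C. Then w decomposes as w = u + v, where u = w − Pw satisfies |u(t)| ≤ C for all t > 0, and v = Pw satisfies the logarithmic Lipschitz estimate |v(b) − v(a)| ≤ C·|log(b/a)| for all a, b > 0. (This is the decomposition W = L^∞ + W₁.) -/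
open MeasureTheory Set Real Filter Topology

lemma Pav_eq_Ioc (w : ℝ → ℝ) (t : ℝ) :
    Pav w t = (1 / t) * ∫ s in Ioc (0 : ℝ) t, w s := by
  rw [Pav, integral_Ioc_eq_integral_Ioo]

lemma Pav_mul (w : ℝ → ℝ) {t : ℝ} (ht : 0 < t) :
    t * Pav w t = ∫ s in (0:ℝ)..t, w s := by
  rw [Pav_eq_Ioc, intervalIntegral.integral_of_le ht.le]
  field_simp

lemma pav_continuousOn {w : ℝ → ℝ} (hInt : ∀ t > (0 : ℝ), IntegrableOn w (Ioo 0 t))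
    {a b : ℝ} (ha : 0 < a) : ContinuousOn (Pav w) (Icc a b) := by
  rcases le_or_gt a b with hab | hab
  · have hI : IntegrableOn w (Icc 0 b) := by
      rw [integrableOn_Icc_iff_integrableOn_Ioo]
      exact (hInt (b + 1) (by linarith)).mono_set (Ioo_subset_Ioo le_rfl (by linarith))
    have hF : ContinuousOn (fun x => ∫ t in Ioc (0:ℝ) x, w t) (Icc 0 b) :=
      intervalIntegral.continuousOn_primitive hI
    have h : ContinuousOn (fun t => (1 / t) * ∫ s in Ioc (0:ℝ) t, w s) (Icc a b) := by
      apply ContinuousOn.mul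
      · exact continuousOn_const.div continuousOn_id
          (fun x hx => ne_of_gt (lt_of_lt_of_le ha hx.1))
      · exact hF.mono (Icc_subset_Icc ha.le le_rfl)
    exact h.congr (fun t _ => Pav_eq_Ioc w t)
  · rw [Icc_eq_empty hab.not_ge]; exact continuousOn_empty _

lemma intervalIntegrable_of_hInt {w : ℝ → ℝ}
    (hInt : ∀ t > (0 : ℝ), IntegrableOn w (Ioo 0 t)) {a b : ℝ} (ha : 0 ≤ a) (hab : a ≤ b)
    (hb : 0 < b) : IntervalIntegrable w volume a b := by
  rw [intervalIntegrable_iff_integrableOn_Ioc_of_le hab]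
  exact (hInt (b + 1) (by linarith)).mono_set
    (fun x hx => ⟨lt_of_le_of_lt ha hx.1, hx.2.trans_lt (by linarith)⟩)

/-- Key step: ratio bound on the oscillation of `Pav`. -/
lemma keyA {w : ℝ → ℝ} {C : ℝ}
    (hInt : ∀ t > (0 : ℝ), IntegrableOn w (Ioo 0 t))
    (hW : ∀ t > (0 : ℝ), |Pav w t - w t| ≤ C)
    {a b : ℝ} (ha : 0 < a) (hab : a ≤ b) :
    |Pav w b - Pav w a| ≤ C * (b / a - 1) := by
  have hC : 0 ≤ C := (abs_nonneg _).trans (hW 1 one_pos)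
  have hcont : ContinuousOn (fun t => |Pav w t - Pav w a|) (Icc a b) :=
    ((pav_continuousOn hInt ha).sub continuousOn_const).abs
  obtain ⟨t₀, ht₀mem, ht₀max⟩ :=
    isCompact_Icc.exists_isMaxOn (Set.nonempty_Icc.mpr hab) hcont
  set M := |Pav w t₀ - Pav w a| with hM
  have hat₀ : a ≤ t₀ := ht₀mem.1
  have ht₀b : t₀ ≤ b := ht₀mem.2
  have ht₀ : 0 < t₀ := lt_of_lt_of_le ha hat₀
  have hMnn : 0 ≤ M := abs_nonneg _
  -- the integral identity
  have hI0a := intervalIntegrable_of_hInt hInt le_rfl ha.le ha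
  have hI0t := intervalIntegrable_of_hInt hInt le_rfl ht₀.le ht₀
  have hIat : IntervalIntegrable w volume a t₀ := hI0a.symm.trans hI0t
  have hkey : ∫ s in a..t₀, (w s - Pav w a) = t₀ * Pav w t₀ - t₀ * Pav w a := by
    rw [intervalIntegral.integral_sub hIat intervalIntegrable_const,
      intervalIntegral.integral_const]
    have hadd : (∫ s in (0:ℝ)..a, w s) + ∫ s in a..t₀, w s = ∫ s in (0:ℝ)..t₀, w s :=
      intervalIntegral.integral_add_adjacent_intervals hI0a hIat
    have h1 : a * Pav w a = ∫ s in (0:ℝ)..a, w s := Pav_mul w ha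
    have h2 : t₀ * Pav w t₀ = ∫ s in (0:ℝ)..t₀, w s := Pav_mul w ht₀
    have h3 : (∫ s in a..t₀, w s) = t₀ * Pav w t₀ - a * Pav w a := by
      rw [h1, h2]; linarith
    rw [h3, smul_eq_mul]; ring
  -- pointwise bound on the integrand
  have hbound : ∀ x ∈ Set.uIoc a t₀, ‖w x - Pav w a‖ ≤ C + M := by
    intro x hx
    rw [Set.uIoc_of_le hat₀] at hx
    have hx0 : 0 < x := lt_of_lt_of_le ha hx.1.le
    have hxmem : x ∈ Icc a b := ⟨hx.1.le, hx.2.trans ht₀b⟩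
    have h1 : |w x - Pav w x| ≤ C := by rw [abs_sub_comm]; exact hW x hx0
    have h2 : |Pav w x - Pav w a| ≤ M := ht₀max hxmem
    calc ‖w x - Pav w a‖ = |(w x - Pav w x) + (Pav w x - Pav w a)| := by
          rw [Real.norm_eq_abs]; congr 1; ring
      _ ≤ |w x - Pav w x| + |Pav w x - Pav w a| := abs_add_le _ _
      _ ≤ C + M := add_le_add h1 h2
  have hint_bound : ‖∫ s in a..t₀, (w s - Pav w a)‖ ≤ (C + M) * |t₀ - a| :=
    intervalIntegral.norm_integral_le_of_norm_le_const hbound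
  rw [hkey, Real.norm_eq_abs, abs_of_nonneg (by linarith : (0:ℝ) ≤ t₀ - a)] at hint_bound
  have he : t₀ * Pav w t₀ - t₀ * Pav w a = t₀ * (Pav w t₀ - Pav w a) := by ring
  rw [he, abs_mul, abs_of_pos ht₀, ← hM] at hint_bound
  have hMa : M * a ≤ C * (t₀ - a) := by nlinarith
  have hfinal : M ≤ C * (b / a - 1) := by
    have h4 : M ≤ C * (t₀ - a) / a := by rw [le_div_iff₀ ha]; exact hMa
    calc M ≤ C * (t₀ - a) / a := h4
      _ ≤ C * (b - a) / a := (div_le_div_iff_of_pos_right ha).mpr (by nlinarith)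
      _ = C * (b / a - 1) := by field_simp
  exact le_trans (ht₀max ⟨hab, le_rfl⟩) hfinal

lemma keyB {w : ℝ → ℝ} {C : ℝ}
    (hInt : ∀ t > (0 : ℝ), IntegrableOn w (Ioo 0 t))
    (hW : ∀ t > (0 : ℝ), |Pav w t - w t| ≤ C)
    {a r : ℝ} (ha : 0 < a) (hr : 1 ≤ r) (n : ℕ) :
    |Pav w (a * r ^ n) - Pav w a| ≤ n * (C * (r - 1)) := by
  induction n with
  | zero => simp
  | succ n ih =>
    have hr0 : 0 < r := lt_of_lt_of_le one_pos hr
    have h1 : 0 < a * r ^ n := by positivity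
    have hle : a * r ^ n ≤ a * r ^ (n + 1) := by
      rw [pow_succ]
      nlinarith [pow_pos hr0 n]
    have step := keyA hInt hW h1 hle
    have hratio : a * r ^ (n + 1) / (a * r ^ n) - 1 = r - 1 := by
      rw [pow_succ]
      field_simp
    rw [hratio] at step
    calc |Pav w (a * r ^ (n + 1)) - Pav w a|
        ≤ |Pav w (a * r ^ (n + 1)) - Pav w (a * r ^ n)| + |Pav w (a * r ^ n) - Pav w a| :=
          abs_sub_le _ _ _
      _ ≤ C * (r - 1) + n * (C * (r - 1)) := add_le_add step ih
      _ = (n + 1 : ℕ) * (C * (r - 1)) := by push_cast; ring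

lemma keyC {w : ℝ → ℝ} {C : ℝ}
    (hInt : ∀ t > (0 : ℝ), IntegrableOn w (Ioo 0 t))
    (hW : ∀ t > (0 : ℝ), |Pav w t - w t| ≤ C)
    {a b : ℝ} (ha : 0 < a) (hab : a ≤ b) :
    |Pav w b - Pav w a| ≤ C * Real.log (b / a) := by
  set L := Real.log (b / a) with hL
  have hb : 0 < b := lt_of_lt_of_le ha hab
  have hba : 1 ≤ b / a := (one_le_div ha).mpr hab
  have hLnn : 0 ≤ L := Real.log_nonneg hba
  have hn : ∀ n : ℕ, 1 ≤ n → |Pav w b - Pav w a| ≤ n * (C * (Real.exp (L / n) - 1)) := by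
    intro n hn1
    have hnpos : (0:ℝ) < n := by exact_mod_cast hn1
    have hr : 1 ≤ Real.exp (L / n) := Real.one_le_exp (by positivity)
    have hrep : a * (Real.exp (L / n)) ^ n = b := by
      rw [← Real.exp_nat_mul]
      have h5 : (n : ℝ) * (L / n) = L := by field_simp
      rw [h5, hL, Real.exp_log (by positivity)]
      field_simp
    have h6 := keyB hInt hW ha hr n
    rwa [hrep] at h6
  -- pass to the limit
  have htend : Tendsto (fun n : ℕ => (n : ℝ) * (C * (Real.exp (L / n) - 1))) atTop
      (𝓝 (C * L)) := by
    rcases eq_or_lt_of_le hLnn with hL0 | hLpos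
    · have heq : (fun n : ℕ => (n : ℝ) * (C * (Real.exp (L / n) - 1))) = fun _ => C * L := by
        funext n; rw [← hL0]; simp
      rw [heq]; exact tendsto_const_nhds
    · have hLne : L ≠ 0 := ne_of_gt hLpos
      have hslope : Tendsto (slope Real.exp 0) (𝓝[≠] (0:ℝ)) (𝓝 1) := by
        have h := hasDerivAt_iff_tendsto_slope.mp (Real.hasDerivAt_exp 0)
        simpa [Real.exp_zero] using h
      have h1 : Tendsto (fun n : ℕ => L / n) atTop (𝓝[≠] (0:ℝ)) := by
        apply tendsto_nhdsWithin_of_tendsto_nhds_of_eventually_within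
        · exact tendsto_const_div_atTop_nhds_zero_nat L
        · filter_upwards [eventually_ge_atTop 1] with n hn1
          have hnpos : (0:ℝ) < n := by exact_mod_cast hn1
          exact ne_of_gt (div_pos hLpos hnpos)
      have h2 : Tendsto (fun n : ℕ => (C * L) * slope Real.exp 0 (L / n)) atTop
          (𝓝 (C * L)) := by
        simpa using (hslope.comp h1).const_mul (C * L)
      refine h2.congr' ?_
      filter_upwards [eventually_ge_atTop 1] with n hn1
      have hnpos : (0:ℝ) < n := by exact_mod_cast hn1
      rw [slope_def_field, Real.exp_zero, sub_zero, div_div_eq_mul_div]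
      field_simp
  exact ge_of_tendsto htend (by
    filter_upwards [eventually_ge_atTop 1] with n hn1
    exact hn n hn1)

/-- The decomposition `W = L^∞ + W₁`: if `‖w‖_W ≤ C` then `w = (w − Pw) + Pw`, where
`w − Pw` is bounded by `C` and `Pw` is logarithmically Lipschitz with constant `C`. -/
theorem W_decomposition (w : ℝ → ℝ) (C : ℝ)
    (hInt : ∀ t > (0 : ℝ), IntegrableOn w (Ioo 0 t))
    (hW : ∀ t > (0 : ℝ), |Pav w t - w t| ≤ C) :
    (∀ t > (0 : ℝ), |w t - Pav w t| ≤ C) ∧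
    (∀ a > (0 : ℝ), ∀ b > (0 : ℝ), |Pav w b - Pav w a| ≤ C * |Real.log (b / a)|) ∧
    (∀ t > (0 : ℝ), w t = (w t - Pav w t) + Pav w t) := by
  refine ⟨fun t ht => by rw [abs_sub_comm]; exact hW t ht, ?_, fun t ht => by ring⟩
  intro a ha b hb
  rcases le_total a b with hab | hab
  · have h := keyC hInt hW ha hab
    rwa [abs_of_nonneg (Real.log_nonneg ((one_le_div ha).mpr hab))]
  · have h := keyC hInt hW hb hab
    have hneg : Real.log (b / a) = - Real.log (a / b) := by
      rw [← Real.log_inv, inv_div]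
    rw [abs_sub_comm, hneg, abs_neg,
      abs_of_nonneg (Real.log_nonneg ((one_le_div hb).mpr hab))]
    exact h
end

section
/- Let φ : ℝ → ℝ be Lipschitz with constant L, and define w(t) = φ(log t) for t > 0. Then w is integrable on (0,t) for every t > 0 and |Pw(t) − w(t)| ≤ L for all t > 0; that is, w ∈ W with ‖w‖_W ≤ L. -/
open MeasureTheory Set Real Filter

lemma log_intervalIntegrable {t : ℝ} (ht : 0 < t) :
    IntervalIntegrable Real.log volume 0 t := by
  have hderiv : ∀ x ∈ Ioo (0:ℝ) 1, HasDerivAt (fun x => x - x * Real.log x) (-Real.log x) x := by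
    intro x hx
    have h := (hasDerivAt_id x).sub (Real.hasDerivAt_mul_log hx.1.ne')
    exact h.congr_deriv (by ring)
  have h1 : IntegrableOn (fun x => -Real.log x) (Ioc (0:ℝ) 1) := by
    apply intervalIntegral.integrableOn_deriv_of_nonneg
      ((continuous_id.sub Real.continuous_mul_log).continuousOn) hderiv
    intro x hx
    simp only [Left.nonneg_neg_iff]
    exact Real.log_nonpos hx.1.le hx.2.le
  have h1' : IntegrableOn Real.log (Ioc (0:ℝ) 1) := integrable_neg_iff.mp h1
  have hIoc : IntegrableOn Real.log (Ioc 0 t) := by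
    rcases le_total t 1 with h | h
    · exact h1'.mono_set (Ioc_subset_Ioc_right h)
    · have h2 : IntegrableOn Real.log (Ioc 1 t) := by
        apply ContinuousOn.integrableOn_compact isCompact_Icc
          (Real.continuousOn_log.mono (fun x hx => ?_)) |>.mono_set Ioc_subset_Icc_self
        have : (1:ℝ) ≤ x := hx.1
        simp only [mem_compl_iff, mem_singleton_iff]; linarith
      have := h1'.union h2
      rwa [Ioc_union_Ioc_eq_Ioc zero_le_one h] at this
  rw [intervalIntegrable_iff_integrableOn_Ioc_of_le ht.le]
  exact hIoc

lemma integral_log_Ioo {t : ℝ} (ht : 0 < t) :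
    ∫ s in Ioo (0:ℝ) t, Real.log s = t * Real.log t - t := by
  rw [← integral_Ioc_eq_integral_Ioo, ← intervalIntegral.integral_of_le ht.le]
  have : ∫ x in (0:ℝ)..t, Real.log x
      = (fun x => x * Real.log x - x) t - (fun x => x * Real.log x - x) 0 := by
    apply intervalIntegral.integral_eq_sub_of_hasDeriv_right
    · exact (Real.continuous_mul_log.sub continuous_id).continuousOn
    · intro x hx
      rw [min_eq_left ht.le, max_eq_right ht.le] at hx
      have h := (Real.hasDerivAt_mul_log hx.1.ne').sub (hasDerivAt_id x)
      have h2 : HasDerivAt (fun x => x * Real.log x - x) (Real.log x) x := by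
        exact h.congr_deriv (by ring)
      exact h2.hasDerivWithinAt
    · exact log_intervalIntegrable ht
  simpa using this

/-- If `φ` is Lipschitz with constant `L`, then `w(t) = φ(log t)` belongs to `W`
with `‖w‖_W ≤ L`. -/
theorem lipschitz_log_mem_W (φ : ℝ → ℝ) (L : NNReal) (hφ : LipschitzWith L φ) :
    (∀ t > (0 : ℝ), IntegrableOn (fun s => φ (Real.log s)) (Ioo 0 t)) ∧
      ∀ t > (0 : ℝ),
        |Pav (fun s => φ (Real.log s)) t - φ (Real.log t)| ≤ (L : ℝ) := by
  have hlog : ∀ t > (0:ℝ), IntegrableOn Real.log (Ioo 0 t) := fun t ht => by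
    have := (log_intervalIntegrable ht)
    rw [intervalIntegrable_iff_integrableOn_Ioo_of_le ht.le] at this
    exact this
  have hmeas : Measurable fun s => φ (Real.log s) :=
    hφ.continuous.measurable.comp Real.measurable_log
  have hint : ∀ t > (0:ℝ), IntegrableOn (fun s => φ (Real.log s)) (Ioo 0 t) := by
    intro t ht
    have hg : IntegrableOn (fun s => |φ 0| + (L : ℝ) * |Real.log s|) (Ioo 0 t) :=
      (integrableOn_const (by simp [Real.volume_Ioo])).add
        (((hlog t ht).abs).const_mul _)
    refine hg.mono' hmeas.aestronglyMeasurable ?_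
    filter_upwards with s
    have h1 : |φ (Real.log s) - φ 0| ≤ (L : ℝ) * |Real.log s - 0| := by
      simpa [Real.dist_eq] using hφ.dist_le_mul (Real.log s) 0
    rw [Real.norm_eq_abs]
    calc |φ (Real.log s)| ≤ |φ (Real.log s) - φ 0| + |φ 0| := by
          simpa using abs_add_le (φ (Real.log s) - φ 0) (φ 0)
      _ ≤ (L : ℝ) * |Real.log s| + |φ 0| := by
          rw [sub_zero] at h1; linarith
      _ = |φ 0| + (L : ℝ) * |Real.log s| := by ring
  refine ⟨hint, ?_⟩
  intro t ht
  set w : ℝ → ℝ := fun s => φ (Real.log s)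
  have hvol : (volume (Ioo (0:ℝ) t)).toReal = t := by
    simp [Real.volume_Ioo, ENNReal.toReal_ofReal ht.le]
  have hconst : IntegrableOn (fun _ : ℝ => w t) (Ioo 0 t) :=
    integrableOn_const (by simp [Real.volume_Ioo])
  have key : Pav w t - w t = (1 / t) * ∫ s in Ioo (0:ℝ) t, (w s - w t) := by
    rw [integral_sub (hint t ht) hconst, setIntegral_const, measureReal_def, hvol, smul_eq_mul]
    unfold Pav
    field_simp
  have hbound : ∀ s ∈ Ioo (0:ℝ) t, ‖w s - w t‖ ≤ (L : ℝ) * (Real.log t - Real.log s) := by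
    intro s hs
    have h1 : |φ (Real.log s) - φ (Real.log t)| ≤ (L : ℝ) * |Real.log s - Real.log t| := by
      simpa [Real.dist_eq] using hφ.dist_le_mul (Real.log s) (Real.log t)
    have hle : Real.log s ≤ Real.log t := Real.log_le_log hs.1 hs.2.le
    rw [Real.norm_eq_abs]
    calc |w s - w t| ≤ (L : ℝ) * |Real.log s - Real.log t| := h1
      _ = (L : ℝ) * (Real.log t - Real.log s) := by rw [abs_sub_comm, abs_of_nonneg (by linarith)]
  have hgint : IntegrableOn (fun s => (L : ℝ) * (Real.log t - Real.log s)) (Ioo 0 t) :=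
    (((integrableOn_const (by simp [Real.volume_Ioo])).sub (hlog t ht)).const_mul _)
  have hIg : ∫ s in Ioo (0:ℝ) t, (L : ℝ) * (Real.log t - Real.log s) = (L : ℝ) * t := by
    rw [integral_const_mul, integral_sub
      (integrableOn_const (C := Real.log t) (by simp [Real.volume_Ioo]) :
        Integrable (fun _ => Real.log t) (volume.restrict (Ioo (0:ℝ) t)))
      (hlog t ht : Integrable (fun s => Real.log s) (volume.restrict (Ioo (0:ℝ) t))),
      setIntegral_const, measureReal_def, hvol, integral_log_Ioo ht, smul_eq_mul]
    ring
  have hnorm : ‖∫ s in Ioo (0:ℝ) t, (w s - w t)‖ ≤ (L : ℝ) * t := by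
    rw [← hIg]
    refine norm_integral_le_of_norm_le hgint ?_
    filter_upwards [ae_restrict_mem measurableSet_Ioo] with s hs using hbound s hs
  rw [key, abs_mul, abs_of_nonneg (by positivity : (0:ℝ) ≤ 1 / t)]
  rw [Real.norm_eq_abs] at hnorm
  calc (1 / t) * |∫ s in Ioo (0:ℝ) t, (w s - w t)| ≤ (1 / t) * ((L : ℝ) * t) := by
        apply mul_le_mul_of_nonneg_left hnorm (by positivity)
    _ = (L : ℝ) := by field_simp
end

section
/- Let v : (0,∞) → ℝ be measurable with |v(s)| ≤ M for all s > 0, and define Q̄v(t) = ∫_t^1 v(s) ds/s for t > 0 (so Q̄v(t) = −∫_1^t v(s) ds/s for t > 1). Then Q̄v is integrable on (0,t) for every t > 0 and |P(Q̄v)(t) − Q̄v(t)| ≤ M for all t > 0; that is, Q̄v ∈ W with ‖Q̄v‖_W ≤ M. (This is the inclusion L^∞ + Q̄(L^∞) ⊆ W.) -/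
open MeasureTheory Set Real Filter

/-- The inclusion `Q̄(L^∞) ⊆ W`: if `|v| ≤ M` on `(0,∞)`, then
`Q̄v(t) = ∫ₜ¹ v(s) ds/s` belongs to `W` with `‖Q̄v‖_W ≤ M`. -/
theorem Qbar_Linfty_subset_W (v : ℝ → ℝ) (M : ℝ)
    (hmeas : Measurable v) (hbound : ∀ s > (0 : ℝ), |v s| ≤ M) :
    (∀ t > (0 : ℝ),
      IntegrableOn (fun r => ∫ s in r..(1 : ℝ), v s / s) (Ioo 0 t)) ∧
    ∀ t > (0 : ℝ),
      |Pav (fun r => ∫ s in r..(1 : ℝ), v s / s) t - ∫ s in t..(1 : ℝ), v s / s| ≤ M := by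
  have hM : 0 ≤ M := le_trans (abs_nonneg _) (hbound 1 one_pos)
  set h : ℝ → ℝ := fun s => v s / s with hh
  have hmeash : Measurable h := hmeas.div measurable_id
  have hnorm : ∀ s : ℝ, 0 < s → ‖h s‖ = |v s| / s := by
    intro s hs
    simp only [hh, norm_eq_abs, abs_div, abs_of_pos hs]
  -- interval integrability of h on positive intervals
  have hInt : ∀ a b : ℝ, 0 < a → 0 < b → IntervalIntegrable h volume a b := by
    intro a b ha hb
    rw [intervalIntegrable_iff]
    have hmin : (0:ℝ) < min a b := lt_min ha hb
    refine Measure.integrableOn_of_bounded (M := M / min a b) measure_Ioc_lt_top.ne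
      hmeash.aestronglyMeasurable ?_
    filter_upwards [ae_restrict_mem measurableSet_uIoc] with s hs
    have hs1 : min a b < s := hs.1
    have hspos : 0 < s := hmin.trans hs1
    rw [hnorm s hspos]
    calc |v s| / s ≤ M / s := by gcongr <;> exact hbound s hspos
      _ ≤ M / min a b := by gcongr <;> exact hs1.le
  -- bound on the primitive
  have hQbound : ∀ r : ℝ, 0 < r → ‖∫ s in r..(1:ℝ), h s‖ ≤ M * |log r| := by
    intro r hr
    have h0 : (0:ℝ) ∉ uIcc r 1 := notMem_uIcc_of_lt hr one_pos
    have hcont : ContinuousOn (fun s : ℝ => M * (1 / s)) (uIcc r 1) := by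
      apply continuousOn_const.mul
      apply continuousOn_const.div continuousOn_id
      intro x hx hx0
      exact h0 (hx0 ▸ hx)
    have hb : IntervalIntegrable (fun s : ℝ => M * (1 / s)) volume r 1 :=
      hcont.intervalIntegrable
    have hae : ∀ᵐ s ∂(volume.restrict (Set.uIoc r 1)), ‖h s‖ ≤ M * (1 / s) := by
      filter_upwards [ae_restrict_mem measurableSet_uIoc] with s hs
      have hspos : 0 < s := (lt_min hr one_pos).trans hs.1
      rw [hnorm s hspos]
      rw [mul_one_div]
      gcongr
      exact hbound s hspos
    have key := intervalIntegral.norm_integral_le_abs_of_norm_le hae hb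
    have : ∫ s in r..(1:ℝ), M * (1 / s) = M * log (1 / r) := by
      rw [intervalIntegral.integral_const_mul, integral_one_div h0]
    rw [this] at key
    rwa [abs_mul, abs_of_nonneg hM, one_div, log_inv, abs_neg] at key
  -- continuity of the primitive on (0, ∞)
  have hQcont : ContinuousOn (fun r => ∫ s in r..(1:ℝ), h s) (Ioi (0:ℝ)) := by
    intro r₀ hr₀
    rw [mem_Ioi] at hr₀
    have heq : (fun r => ∫ s in r..(1:ℝ), h s) = fun r => -∫ s in (1:ℝ)..r, h s := by
      funext r
      rw [← intervalIntegral.integral_symm]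
    rw [heq]
    apply ContinuousAt.continuousWithinAt
    apply ContinuousAt.neg
    have hint : IntervalIntegrable h volume (min 1 (r₀/2)) (max 1 (r₀+1)) :=
      hInt _ _ (lt_min one_pos (half_pos hr₀)) (lt_max_of_lt_left one_pos)
    have hcw : ContinuousWithinAt (fun r => ∫ s in (1:ℝ)..r, h s) (Icc (r₀/2) (r₀+1)) r₀ :=
      intervalIntegral.continuousWithinAt_primitive (measure_singleton r₀) hint
    exact hcw.continuousAt (Icc_mem_nhds (half_lt_self hr₀) (lt_add_one r₀))
  -- integrability of Qv on (0, t)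
  have hQint : ∀ t : ℝ, 0 < t → IntegrableOn (fun r => ∫ s in r..(1:ℝ), h s) (Ioo 0 t) := by
    intro t ht
    have hg : IntegrableOn (fun r : ℝ => M * (2 * r ^ (-(1/2) : ℝ) + max 0 (log t))) (Ioo 0 t) := by
      apply Integrable.const_mul
      apply Integrable.add
      · apply Integrable.const_mul
        have hrint := intervalIntegral.intervalIntegrable_rpow' (a := 0) (b := t)
          (by norm_num : (-1:ℝ) < -(1/2))
        rw [intervalIntegrable_iff, uIoc_of_le ht.le] at hrint
        exact hrint.mono_set Ioo_subset_Ioc_self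
      · exact integrableOn_const measure_Ioo_lt_top.ne
    apply Integrable.mono' hg
      (((hQcont.mono (fun x hx => hx.1)).aestronglyMeasurable measurableSet_Ioo))
    filter_upwards [ae_restrict_mem measurableSet_Ioo] with r hr
    have hlog : |log r| ≤ 2 * r ^ (-(1/2) : ℝ) + max 0 (log t) := by
      rcases le_or_gt r 1 with h1 | h1
      · have habs : |log r| = -log r := abs_of_nonpos (log_nonpos hr.1.le h1)
        have h2 : log (r ^ (-(1/2) : ℝ)) = -(1/2) * log r := log_rpow hr.1 _
        have hpos : 0 < r ^ (-(1/2) : ℝ) := rpow_pos_of_pos hr.1 _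
        have h3 : log (r ^ (-(1/2) : ℝ)) ≤ r ^ (-(1/2) : ℝ) :=
          (log_le_sub_one_of_pos hpos).trans (by linarith)
        have h4 : (0:ℝ) ≤ max 0 (log t) := le_max_left _ _
        rw [habs]
        nlinarith
      · have habs : |log r| = log r := abs_of_nonneg (log_nonneg h1.le)
        have hlt : log r ≤ log t := Real.log_le_log hr.1 hr.2.le
        have h4 : (0:ℝ) ≤ 2 * r ^ (-(1/2) : ℝ) := by positivity
        rw [habs]
        have := le_max_right (0:ℝ) (log t)
        linarith
    calc ‖∫ s in r..(1:ℝ), h s‖ ≤ M * |log r| := hQbound r hr.1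
      _ ≤ M * (2 * r ^ (-(1/2) : ℝ) + max 0 (log t)) := mul_le_mul_of_nonneg_left hlog hM
  refine ⟨fun t ht => hQint t ht, ?_⟩
  intro t ht
  set Q : ℝ → ℝ := fun r => ∫ s in r..(1:ℝ), h s with hQ
  have hQt := hQint t ht
  have hsplit : ∀ r ∈ Ioo (0:ℝ) t, Q r = Q t + ∫ s in r..t, h s := by
    intro r hr
    have hadd := intervalIntegral.integral_add_adjacent_intervals
      (hInt r t hr.1 ht) (hInt t 1 ht one_pos)
    rw [hQ]
    dsimp only
    rw [← hadd]
    ring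
  have hFint : IntegrableOn (fun r => ∫ s in r..t, h s) (Ioo 0 t) := by
    apply Integrable.congr (hQt.sub (integrable_const (Q t)))
    filter_upwards [ae_restrict_mem measurableSet_Ioo] with r hr
    simp only [Pi.sub_apply]
    rw [hsplit r hr]
    ring
  -- Fubini setup
  set μt : Measure ℝ := volume.restrict (Ioo (0:ℝ) t) with hμt
  set f : ℝ → ℝ → ℝ := fun r s => if r < s then h s else 0 with hf
  have hfmeas : AEStronglyMeasurable (Function.uncurry f) (μt.prod μt) := by
    apply Measurable.aestronglyMeasurable
    exact Measurable.ite (measurableSet_lt measurable_fst measurable_snd)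
      (hmeash.comp measurable_snd) measurable_const
  have hslice : ∀ s : ℝ, (fun r => f r s) = (Iio s).indicator (fun _ => h s) := by
    intro s; funext r
    simp only [hf, indicator, mem_Iio]
  have habs_int : Integrable (fun s => |v s|) μt := by
    refine Measure.integrableOn_of_bounded (M := M) measure_Ioo_lt_top.ne
      hmeas.abs.aestronglyMeasurable ?_
    filter_upwards [ae_restrict_mem measurableSet_Ioo] with s hs
    rw [norm_eq_abs, abs_abs]
    exact hbound s hs.1
  have hprodInt : Integrable (Function.uncurry f) (μt.prod μt) := by
    rw [integrable_prod_iff' hfmeas]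
    constructor
    · refine Eventually.of_forall fun s => ?_
      have : (fun r => Function.uncurry f (r, s)) = (Iio s).indicator (fun _ => h s) :=
        hslice s
      rw [this]
      exact (integrable_const (h s)).indicator measurableSet_Iio
    · apply habs_int.congr
      filter_upwards [ae_restrict_mem measurableSet_Ioo] with s hs
      have h1 : (fun r => ‖Function.uncurry f (r, s)‖) = (Iio s).indicator (fun _ => ‖h s‖) := by
        funext r
        simp only [Function.uncurry, hf, indicator, mem_Iio]
        split <;> simp
      rw [h1, hμt, setIntegral_indicator measurableSet_Iio]
      have h2 : Ioo (0:ℝ) t ∩ Iio s = Ioo 0 s := by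
        ext x
        constructor
        · rintro ⟨⟨hx1, _⟩, hx3⟩
          exact ⟨hx1, hx3⟩
        · rintro ⟨hx1, hx2⟩
          exact ⟨⟨hx1, hx2.trans hs.2⟩, hx2⟩
      rw [h2, setIntegral_const, Real.volume_real_Ioo_of_le hs.1.le, sub_zero,
        smul_eq_mul, hnorm s hs.1, mul_comm s (|v s| / s), div_mul_cancel₀ _ hs.1.ne']
  have hswap := MeasureTheory.integral_integral_swap hprodInt
  have hL : (∫ r, ∫ s, f r s ∂μt ∂μt) = ∫ r in Ioo (0:ℝ) t, ∫ s in r..t, h s := by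
    rw [hμt]
    apply setIntegral_congr_fun measurableSet_Ioo
    intro r hr
    dsimp only
    have e1 : ∫ (s : ℝ) in Ioo (0:ℝ) t, f r s = ∫ s in Ioo (0:ℝ) t, (Ioi r).indicator h s :=
      integral_congr_ae (Eventually.of_forall fun s => by
        by_cases hrs : r < s <;> simp [hf, indicator, mem_Ioi, hrs])
    rw [e1, setIntegral_indicator measurableSet_Ioi]
    have h2 : Ioo (0:ℝ) t ∩ Ioi r = Ioo r t := by
      ext x
      constructor
      · rintro ⟨⟨_, hx2⟩, hx3⟩
        exact ⟨hx3, hx2⟩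
      · rintro ⟨hx1, hx2⟩
        exact ⟨⟨hr.1.trans hx1, hx2⟩, hx1⟩
    rw [h2, intervalIntegral.integral_of_le hr.2.le, integral_Ioc_eq_integral_Ioo]
  have hR : (∫ s, ∫ r, f r s ∂μt ∂μt) = ∫ s in Ioo (0:ℝ) t, v s := by
    rw [hμt]
    apply setIntegral_congr_fun measurableSet_Ioo
    intro s hs
    dsimp only
    have e1 : ∫ (r : ℝ) in Ioo (0:ℝ) t, f r s = ∫ r in Ioo (0:ℝ) t, (Iio s).indicator (fun _ => h s) r :=
      integral_congr_ae (Eventually.of_forall fun r => by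
        by_cases hrs : r < s <;> simp [hf, indicator, mem_Iio, hrs])
    rw [e1, setIntegral_indicator measurableSet_Iio]
    have h2 : Ioo (0:ℝ) t ∩ Iio s = Ioo 0 s := by
      ext x
      constructor
      · rintro ⟨⟨hx1, _⟩, hx3⟩
        exact ⟨hx1, hx3⟩
      · rintro ⟨hx1, hx2⟩
        exact ⟨⟨hx1, hx2.trans hs.2⟩, hx2⟩
    rw [h2, setIntegral_const, Real.volume_real_Ioo_of_le hs.1.le, sub_zero,
      smul_eq_mul]
    rw [show h s = v s / s from rfl, mul_comm s (v s / s), div_mul_cancel₀ _ hs.1.ne']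
  have hkey : ∫ r in Ioo (0:ℝ) t, Q r = t * Q t + ∫ s in Ioo (0:ℝ) t, v s := by
    calc ∫ r in Ioo (0:ℝ) t, Q r
        = ∫ r in Ioo (0:ℝ) t, (Q t + ∫ s in r..t, h s) :=
          setIntegral_congr_fun measurableSet_Ioo hsplit
      _ = (∫ _r in Ioo (0:ℝ) t, Q t) + ∫ r in Ioo (0:ℝ) t, ∫ s in r..t, h s :=
          integral_add (integrable_const _) hFint
      _ = t * Q t + ∫ s in Ioo (0:ℝ) t, v s := by
          rw [setIntegral_const, Real.volume_real_Ioo_of_le ht.le, sub_zero,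
            smul_eq_mul, ← hL, hswap, hR]
  have hvbound : ‖∫ s in Ioo (0:ℝ) t, v s‖ ≤ M * t := by
    have := norm_setIntegral_le_of_norm_le_const (μ := volume) (s := Ioo (0:ℝ) t) (f := v)
      measure_Ioo_lt_top (fun x hx => by
        rw [norm_eq_abs]; exact hbound x hx.1)
    rwa [Real.volume_real_Ioo_of_le ht.le, sub_zero] at this
  have htne : t ≠ 0 := ht.ne'
  have hPav : Pav Q t - Q t = (1 / t) * ∫ s in Ioo (0:ℝ) t, v s := by
    rw [Pav, hkey]
    field_simp
    ring
  show |Pav Q t - Q t| ≤ M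
  rw [hPav]
  rw [abs_mul, abs_of_nonneg (by positivity : (0:ℝ) ≤ 1 / t)]
  calc (1 / t) * |∫ s in Ioo (0:ℝ) t, v s| ≤ (1 / t) * (M * t) := by
        apply mul_le_mul_of_nonneg_left _ (by positivity)
        exact hvbound
    _ = M := by field_simp
end

section
/- Let w : (0,∞) → ℝ be integrable on (0,t) for every t > 0 with ‖w‖_W := sup_{t>0} |Pw(t) − w(t)| ≤ C. Then there exist measurable functions u, v : (0,∞) → ℝ with sup_{t>0} |u(t)| ≤ C + |Pw(1)| and sup_{t>0} |v(t)| ≤ C such that w(t) = u(t) + ∫_t^1 v(s) ds/s for every t > 0. (Explicitly one may take u = w − Pw + Pw(1) and v = w^#. This is the inclusion W ⊆ L^∞ + Q̄(L^∞).) -/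
open MeasureTheory Set Real Filter

/-- The primitive `Gw(t) = ∫₀ᵗ w`. -/
noncomputable def Gw (w : ℝ → ℝ) (t : ℝ) : ℝ := ∫ s in Ioo (0 : ℝ) t, w s

lemma Pav_eq (w : ℝ → ℝ) (t : ℝ) : Pav w t = (1 / t) * Gw w t := rfl

/-- Key integral identity via Fubini. -/
lemma key_identity (w : ℝ → ℝ) (hmeas : Measurable w)
    (hInt : ∀ t > (0 : ℝ), IntegrableOn w (Ioo 0 t))
    {a b : ℝ} (ha : 0 < a) (hab : a ≤ b) :
    ∫ s in Ioc a b, (Pav w s - w s) / s = Pav w a - Pav w b := by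
  have hb : 0 < b := lt_of_lt_of_le ha hab
  have hwb : IntegrableOn w (Ioo 0 b) := hInt b hb
  have hwab : IntegrableOn w (Ioc a b) := (hInt (b+1) (by linarith)).mono_set (by
    intro x hx; exact ⟨lt_trans ha hx.1, hx.2.trans_lt (lt_add_one b)⟩)
  set f : ℝ → ℝ → ℝ := fun s r => if r < s then 1 / s ^ 2 * w r else 0 with hf
  set μ : Measure ℝ := volume.restrict (Ioc a b)
  set ν : Measure ℝ := volume.restrict (Ioo (0 : ℝ) b)
  have hμfin : IsFiniteMeasure μ := by
    constructor
    simp only [μ, Measure.restrict_apply MeasurableSet.univ, univ_inter, Real.volume_Ioc]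
    exact ENNReal.ofReal_lt_top
  have hfmeas : Measurable (Function.uncurry f) := by
    apply Measurable.ite (measurableSet_lt measurable_snd measurable_fst)
    · exact (measurable_const.div ((measurable_fst.pow_const 2))).mul (hmeas.comp measurable_snd)
    · exact measurable_const
  -- integrability on the product
  have hfint : Integrable (Function.uncurry f) (μ.prod ν) := by
    apply Integrable.mono' (g := fun p => (1 / a ^ 2) * |w p.2|)
    · exact (integrable_const (μ := μ) _).mul_prod (hwb.abs)
    · exact hfmeas.aestronglyMeasurable
    · have : μ.prod ν = (volume.prod volume).restrict ((Ioc a b) ×ˢ (Ioo (0:ℝ) b)) :=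
        Measure.prod_restrict _ _
      rw [this]
      filter_upwards [ae_restrict_mem (measurableSet_Ioc.prod measurableSet_Ioo)] with p hp
      obtain ⟨hp1, hp2⟩ := hp
      simp only [Function.uncurry, f]
      split_ifs with h
      · rw [norm_mul, Real.norm_eq_abs, Real.norm_eq_abs]
        have hp0 : 0 < p.1 := ha.trans hp1.1
        have habs : |1 / p.1 ^ 2| = 1 / p.1 ^ 2 :=
          abs_of_pos (one_div_pos.mpr (pow_pos hp0 2))
        rw [habs]
        have h1 : 1 / p.1 ^ 2 ≤ 1 / a ^ 2 := by
          apply one_div_le_one_div_of_le (pow_pos ha 2)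
          nlinarith [hp1.1]
        exact mul_le_mul_of_nonneg_right h1 (abs_nonneg _)
      · rw [norm_zero]; positivity
  -- pointwise value of the inner integral in s
  have hinner : ∀ s ∈ Ioc a b, ∫ r, f s r ∂ν = 1 / s ^ 2 * Gw w s := by
    intro s hs
    have : ∀ r, f s r = (1 / s ^ 2) * (Iio s).indicator w r := by
      intro r
      simp only [f, indicator_apply, mem_Iio]
      split_ifs <;> simp
    simp only [this]
    rw [integral_const_mul, setIntegral_indicator measurableSet_Iio]
    have hset : Ioo (0:ℝ) b ∩ Iio s = Ioo 0 s := by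
      ext r
      simp only [mem_inter_iff, mem_Ioo, mem_Iio]
      constructor
      · rintro ⟨⟨h1, _⟩, h3⟩; exact ⟨h1, h3⟩
      · rintro ⟨h1, h2⟩; exact ⟨⟨h1, h2.trans_le hs.2⟩, h2⟩
    rw [hset]; rfl
  -- integrability of s ↦ Gw s / s^2 on (a,b]
  have hGint : IntegrableOn (fun s => 1 / s ^ 2 * Gw w s) (Ioc a b) := by
    have := hfint.integral_prod_left
    apply this.congr
    filter_upwards [ae_restrict_mem measurableSet_Ioc] with s hs
    exact hinner s hs
  have hwsint : IntegrableOn (fun s => w s / s) (Ioc a b) := by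
    apply Integrable.mono' (g := fun s => a⁻¹ * |w s|) (hwab.abs.const_mul _)
    · exact ((hmeas.div measurable_id).aestronglyMeasurable).restrict
    · filter_upwards [ae_restrict_mem measurableSet_Ioc] with s hs
      rw [norm_div, Real.norm_eq_abs, Real.norm_eq_abs, abs_of_pos (ha.trans hs.1),
        div_eq_inv_mul]
      have hsa : s⁻¹ ≤ a⁻¹ := by gcongr; exact hs.1.le
      exact mul_le_mul_of_nonneg_right hsa (abs_nonneg _)
  -- Fubini computation
  have fub : ∫ s in Ioc a b, (1 / s ^ 2) * Gw w s =
      (1 / a) * Gw w a - (1 / b) * Gw w b + ∫ s in Ioc a b, w s / s := by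
    have lhs_eq : ∫ s in Ioc a b, (1 / s ^ 2) * Gw w s = ∫ s, ∫ r, f s r ∂ν ∂μ := by
      refine (setIntegral_congr_fun measurableSet_Ioc ?_).symm
      intro s hs; exact hinner s hs
    rw [lhs_eq, integral_integral_swap hfint]
    -- inner integral in r
    have hinner2 : ∀ r ∈ Ioo (0:ℝ) b, ∫ s, f s r ∂μ = ((max a r)⁻¹ - b⁻¹) * w r := by
      intro r hr
      have : ∀ s, f s r = (Ioi r).indicator (fun s => 1 / s ^ 2) s * w r := by
        intro s
        simp only [f, indicator_apply, mem_Ioi]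
        split_ifs <;> simp
      simp only [this]
      rw [integral_mul_const, setIntegral_indicator measurableSet_Ioi]
      have hset : Ioc a b ∩ Ioi r = Ioc (max a r) b := by
        ext s
        simp only [mem_inter_iff, mem_Ioc, mem_Ioi, max_lt_iff]
        tauto
      rw [hset]
      have hmr : 0 < max a r := lt_max_of_lt_left ha
      have hmrb : max a r ≤ b := max_le hab hr.2.le
      have : ∫ s in Ioc (max a r) b, 1 / s ^ 2 = (max a r)⁻¹ - b⁻¹ := by
        rw [← intervalIntegral.integral_of_le hmrb]
        have hz : (0:ℝ) ∉ uIcc (max a r) b := by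
          rw [uIcc_of_le hmrb]
          intro h
          exact absurd h.1 (not_le.mpr hmr)
        have hcg : (∫ x in (max a r)..b, 1 / x ^ 2) = ∫ x in (max a r)..b, x ^ (-2 : ℤ) :=
          intervalIntegral.integral_congr (fun x _ => by rw [zpow_neg, one_div]; norm_cast)
        rw [hcg, integral_zpow (Or.inr ⟨by decide, hz⟩)]
        norm_num
        ring
      rw [this]
    rw [setIntegral_congr_fun measurableSet_Ioo hinner2]
    -- split the integral over (0,b) = (0,a) ∪ [a,b)
    have hsplit : Ioo (0:ℝ) a ∪ Ico a b = Ioo 0 b := Ioo_union_Ico_eq_Ioo ha hab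
    have hintgr : IntegrableOn (fun r => ((max a r)⁻¹ - b⁻¹) * w r) (Ioo 0 b) := by
      apply Integrable.mono' (g := fun r => a⁻¹ * |w r|) (hwb.abs.const_mul _)
      · exact (((measurable_const.max measurable_id).inv.sub measurable_const).mul
          hmeas).aestronglyMeasurable.restrict
      · filter_upwards [ae_restrict_mem measurableSet_Ioo] with r hr
        rw [Real.norm_eq_abs, abs_mul]
        have h1 : 0 < max a r := lt_max_of_lt_left ha
        have h3 : (max a r)⁻¹ ≤ a⁻¹ := by gcongr; exact le_max_left _ _
        have h4 : (0:ℝ) < b⁻¹ := inv_pos.mpr hb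
        have h5 : b⁻¹ ≤ a⁻¹ := by gcongr
        have hbound : |(max a r)⁻¹ - b⁻¹| ≤ a⁻¹ := by
          rw [abs_sub_le_iff]
          exact ⟨by linarith [inv_pos.mpr h1], by linarith [inv_pos.mpr h1]⟩
        exact mul_le_mul_of_nonneg_right hbound (abs_nonneg _)
    have hdisj : Disjoint (Ioo (0:ℝ) a) (Ico a b) := by
      rw [Set.disjoint_left]
      rintro x ⟨_, h2⟩ ⟨h3, _⟩
      exact absurd h3 (not_le.mpr h2)
    rw [← hsplit, setIntegral_union hdisj measurableSet_Ico
      (hintgr.mono_set (by rw [← hsplit]; exact subset_union_left))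
      (hintgr.mono_set (by rw [← hsplit]; exact subset_union_right))]
    -- on (0,a): max a r = a
    have e1 : ∫ r in Ioo (0:ℝ) a, ((max a r)⁻¹ - b⁻¹) * w r = (a⁻¹ - b⁻¹) * Gw w a := by
      rw [setIntegral_congr_fun measurableSet_Ioo
        (g := fun r => (a⁻¹ - b⁻¹) * w r) (fun r hr => by rw [max_eq_left hr.2.le]),
        integral_const_mul]
      rfl
    -- on [a,b): max a r = r
    have hwIco : IntegrableOn w (Ico a b) := hwb.mono_set (by
      rw [← hsplit]; exact subset_union_right)
    have hwIcodiv : IntegrableOn (fun r => w r / r) (Ico a b) := by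
      apply Integrable.mono' (g := fun r => a⁻¹ * |w r|) (hwIco.abs.const_mul _)
      · exact ((hmeas.div measurable_id).aestronglyMeasurable).restrict
      · filter_upwards [ae_restrict_mem measurableSet_Ico] with s hs
        rw [norm_div, Real.norm_eq_abs, Real.norm_eq_abs, abs_of_pos (ha.trans_le hs.1),
          div_eq_inv_mul]
        have hsa : s⁻¹ ≤ a⁻¹ := by gcongr; exact hs.1
        exact mul_le_mul_of_nonneg_right hsa (abs_nonneg _)
    have e2 : ∫ r in Ico a b, ((max a r)⁻¹ - b⁻¹) * w r
        = (∫ r in Ico a b, w r / r) - b⁻¹ * ∫ r in Ico a b, w r := by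
      rw [setIntegral_congr_fun measurableSet_Ico
        (g := fun r => w r / r - b⁻¹ * w r) (fun r hr => by
          rw [max_eq_right hr.1, sub_mul, inv_mul_eq_div]),
        integral_sub hwIcodiv (hwIco.const_mul _), integral_const_mul]
    have e3 : ∫ r in Ico a b, w r = Gw w b - Gw w a := by
      have : Gw w b = Gw w a + ∫ r in Ico a b, w r := by
        unfold Gw
        rw [← hsplit, setIntegral_union hdisj
          measurableSet_Ico (hwb.mono_set (by rw [← hsplit]; exact subset_union_left)) hwIco]
      linarith
    have e4 : ∫ r in Ico a b, w r / r = ∫ s in Ioc a b, w s / s := by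
      rw [integral_Ico_eq_integral_Ioo, integral_Ioc_eq_integral_Ioo]
    rw [e1, e2, e3, e4]
    ring
  -- conclude
  have lhs_eq : ∫ s in Ioc a b, (Pav w s - w s) / s
      = ∫ s in Ioc a b, ((1 / s ^ 2) * Gw w s - w s / s) := by
    apply setIntegral_congr_fun measurableSet_Ioc
    intro s hs
    have hs0 : s ≠ 0 := (ha.trans hs.1).ne'
    show (Pav w s - w s) / s = 1 / s ^ 2 * Gw w s - w s / s
    rw [Pav_eq]
    field_simp
  rw [lhs_eq, integral_sub hGint hwsint, fub, Pav_eq, Pav_eq]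
  ring

/-- The inclusion `W ⊆ L^∞ + Q̄(L^∞)`: if `‖w‖_W ≤ C` then `w = u + Q̄v` with
`|u| ≤ C + |Pw(1)|` and `|v| ≤ C` on `(0,∞)`. -/
theorem W_subset_Linfty_plus_Qbar (w : ℝ → ℝ) (C : ℝ) (hmeas : Measurable w)
    (hInt : ∀ t > (0 : ℝ), IntegrableOn w (Ioo 0 t))
    (hW : ∀ t > (0 : ℝ), |Pav w t - w t| ≤ C) :
    ∃ u v : ℝ → ℝ, Measurable u ∧ Measurable v ∧
      (∀ t > (0 : ℝ), |u t| ≤ C + |Pav w 1|) ∧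
      (∀ t > (0 : ℝ), |v t| ≤ C) ∧
      ∀ t > (0 : ℝ), w t = u t + ∫ s in t..(1 : ℝ), v s / s := by
  -- measurability of Gw and Pav
  set w' : ℝ → ℝ := (Ioi (0:ℝ)).indicator w with hw'
  have hw'int : ∀ a b : ℝ, IntervalIntegrable w' volume a b := by
    intro a b
    have key : ∀ c d : ℝ, IntegrableOn w' (Ioc c d) := by
      intro c d
      rw [hw', IntegrableOn, integrable_indicator_iff measurableSet_Ioi, IntegrableOn,
        Measure.restrict_restrict measurableSet_Ioi]
      apply (hInt (|d| + 1) (by positivity)).mono_set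
      rintro x ⟨hx1, _, hx3⟩
      exact ⟨hx1, lt_of_le_of_lt (hx3.trans (le_abs_self d)) (by linarith)⟩
    exact ⟨key a b, key b a⟩
  have hGw_eq : ∀ t : ℝ, Gw w t = ∫ s in (0:ℝ)..t, w' s := by
    intro t
    rcases le_or_gt t 0 with ht | ht
    · rw [intervalIntegral.integral_of_ge ht]
      have h1 : Gw w t = 0 := by
        unfold Gw
        rw [Ioo_eq_empty (by linarith), Measure.restrict_empty, integral_zero_measure]
      have h2 : ∫ s in Ioc t 0, w' s = 0 := by
        rw [setIntegral_congr_fun measurableSet_Ioc (g := fun _ => (0:ℝ))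
          (fun s hs => indicator_of_notMem (by simpa using hs.2) w)]
        simp
      rw [h1, h2, neg_zero]
    · rw [intervalIntegral.integral_of_le ht.le,
        setIntegral_congr_fun (g := w) measurableSet_Ioc
          (fun s hs => indicator_of_mem (mem_Ioi.mpr hs.1) w),
        integral_Ioc_eq_integral_Ioo]
      rfl
  have hGw_cont : Continuous (Gw w) := by
    have := intervalIntegral.continuous_primitive hw'int 0
    exact this.congr (fun t => (hGw_eq t).symm)
  have hPav_meas : Measurable (Pav w) := by
    have : Pav w = fun t => (1 / t) * Gw w t := rfl
    rw [this]
    exact (measurable_const.div measurable_id).mul hGw_cont.measurable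
  have hC : 0 ≤ C := le_trans (abs_nonneg _) (hW 1 one_pos)
  refine ⟨(Ioi (0:ℝ)).indicator (fun t => w t - Pav w t + Pav w 1),
    (Ioi (0:ℝ)).indicator (fun t => Pav w t - w t), ?_, ?_, ?_, ?_, ?_⟩
  · exact (((hmeas.sub hPav_meas).add_const _).indicator measurableSet_Ioi)
  · exact ((hPav_meas.sub hmeas).indicator measurableSet_Ioi)
  · intro t ht
    rw [indicator_of_mem (mem_Ioi.mpr ht)]
    calc |w t - Pav w t + Pav w 1| ≤ |w t - Pav w t| + |Pav w 1| := abs_add_le _ _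
      _ ≤ C + |Pav w 1| := by
          rw [abs_sub_comm]
          exact add_le_add_left (hW t ht) _
  · intro t ht
    rw [indicator_of_mem (mem_Ioi.mpr ht)]
    exact hW t ht
  · intro t ht
    rw [indicator_of_mem (mem_Ioi.mpr ht)]
    have hcongr : ∫ s in t..(1:ℝ),
        (Ioi (0:ℝ)).indicator (fun t => Pav w t - w t) s / s
        = ∫ s in t..(1:ℝ), (Pav w s - w s) / s := by
      apply intervalIntegral.integral_congr
      intro s hs
      have hs0 : 0 < s := by
        rcases hs with ⟨h1, _⟩
        calc (0:ℝ) < min t 1 := lt_min ht one_pos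
          _ ≤ s := h1
      show (Ioi (0:ℝ)).indicator (fun t => Pav w t - w t) s / s = (Pav w s - w s) / s
      rw [indicator_of_mem (mem_Ioi.mpr hs0)]
    rw [hcongr]
    rcases le_or_gt t 1 with h | h
    · rw [intervalIntegral.integral_of_le h, key_identity w hmeas hInt ht h]
      ring
    · rw [intervalIntegral.integral_of_ge h.le, key_identity w hmeas hInt one_pos h.le]
      ring
end

section
/- Let E be a real Banach space and let u : (0,∞) → E be strongly measurable with ∫₀^∞ (1 + |log s|)·‖u(s)‖ ds/s < ∞ and ∫₀^∞ u(s) ds/s = 0 (as a Bochner integral). Let w : (0,∞) → ℝ be integrable on (0,t) for every t > 0 with ‖w‖_W := sup_{t>0} |Pw(t) − w(t)| < ∞. Then s ↦ Pw(s)·u(s)/s is Bochner integrable, the function t ↦ (Pw(t) − w(t))·(∫₀ᵗ u(s) ds/s)/t is Bochner integrable, and ∫₀^∞ Pw(s)·u(s) ds/s = ∫₀^∞ (Pw(t) − w(t))·(∫₀ᵗ u(s) ds/s) dt/t. -/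
open MeasureTheory Set Real Filter
open Function

set_option maxHeartbeats 1000000

lemma integral_inv_Ioc {a b : ℝ} (ha : 0 < a) (hab : a ≤ b) :
    ∫ t in Ioc a b, t⁻¹ = log b - log a := by
  rw [← intervalIntegral.integral_of_le hab, integral_inv_of_pos ha (lt_of_lt_of_le ha hab),
    log_div (lt_of_lt_of_le ha hab).ne' ha.ne']

lemma integral_inv_sq_Ioc {a b : ℝ} (ha : 0 < a) (hab : a ≤ b) :
    ∫ t in Ioc a b, (t ^ 2)⁻¹ = a⁻¹ - b⁻¹ := by
  rw [← intervalIntegral.integral_of_le hab]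
  have h : ∀ x ∈ uIcc a b, HasDerivAt (fun y : ℝ => -y⁻¹) ((x ^ 2)⁻¹) x := by
    intro x hx
    have hx0 : x ≠ 0 := by
      have : 0 < x := lt_of_lt_of_le ha (by rw [uIcc_of_le hab] at hx; exact hx.1)
      exact this.ne'
    have := (hasDerivAt_inv hx0).neg; simp only [neg_neg] at this; exact this
  have hint : IntervalIntegrable (fun x : ℝ => (x ^ 2)⁻¹) volume a b := by
    apply ContinuousOn.intervalIntegrable
    apply ContinuousOn.inv₀ (by fun_prop)
    intro x hx
    have : 0 < x := lt_of_lt_of_le ha (by rw [uIcc_of_le hab] at hx; exact hx.1)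
    positivity
  rw [intervalIntegral.integral_eq_sub_of_hasDerivAt h hint]
  ring

lemma w_asm (w : ℝ → ℝ) (hwInt : ∀ t > (0 : ℝ), IntegrableOn w (Ioo 0 t)) :
    AEStronglyMeasurable w (volume.restrict (Ioi 0)) := by
  have : Ioi (0:ℝ) = ⋃ n : ℕ, Ioo 0 ((n : ℝ) + 1) := by
    ext x
    simp only [mem_Ioi, mem_iUnion, mem_Ioo]
    constructor
    · intro hx
      obtain ⟨n, hn⟩ := exists_nat_gt x
      exact ⟨n, hx, lt_of_lt_of_le hn (by linarith)⟩
    · rintro ⟨n, h1, _⟩; exact h1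
  rw [this, aestronglyMeasurable_iUnion_iff]
  intro n
  exact (hwInt (n + 1) (by positivity)).aestronglyMeasurable

lemma wI (w : ℝ → ℝ) (hwInt : ∀ t > (0 : ℝ), IntegrableOn w (Ioo 0 t))
    {a b : ℝ} (ha : 0 < a) : IntegrableOn w (Ioc a b) := by
  rcases le_or_gt a b with h | h
  · apply (hwInt (b + 1) (by linarith)).mono_set
    intro x hx
    exact ⟨lt_trans ha hx.1, by linarith [hx.2]⟩
  · simp [Ioc_eq_empty (not_lt.mpr h.le)]

lemma wI0 (w : ℝ → ℝ) (hwInt : ∀ t > (0 : ℝ), IntegrableOn w (Ioo 0 t))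
    {b : ℝ} (hb : 0 < b) : IntegrableOn w (Ioc 0 b) := by
  rw [integrableOn_Ioc_iff_integrableOn_Ioo]
  exact hwInt b hb

lemma pav_key (w : ℝ → ℝ) (hwInt : ∀ t > (0 : ℝ), IntegrableOn w (Ioo 0 t))
    {a b : ℝ} (ha : 0 < a) (hab : a ≤ b) :
    ∫ t in Ioc a b, (Pav w t - w t) / t = Pav w a - Pav w b := by
  have hb : 0 < b := lt_of_lt_of_le ha hab
  set μ := volume.restrict (Ioc a b) with hμ
  haveI : IsFiniteMeasure μ := ⟨by rw [hμ, Measure.restrict_apply_univ]; exact measure_Ioc_lt_top⟩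
  set F : ℝ → ℝ := fun t => ∫ s in Ioc (0:ℝ) t, w s with hF
  have hPavF : ∀ t : ℝ, Pav w t = (1 / t) * F t := by
    intro t; simp only [Pav, hF]; rw [integral_Ioc_eq_integral_Ioo]
  have hwa : AEStronglyMeasurable w μ :=
    (w_asm w hwInt).mono_measure (Measure.restrict_mono (fun x hx => lt_trans ha hx.1) le_rfl)
  have hFsplit : ∀ t, a ≤ t → F t = F a + ∫ s in Ioc a t, w s := by
    intro t h
    simp only [hF]
    rw [← Ioc_union_Ioc_eq_Ioc ha.le h,
      setIntegral_union (Ioc_disjoint_Ioc_of_le le_rfl) measurableSet_Ioc (wI0 w hwInt ha)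
        (wI w hwInt ha)]
  -- the kernel
  set f : ℝ → ℝ → ℝ := fun t r => if r ≤ t then (t ^ 2)⁻¹ * w r else 0 with hfdef
  have hf_eq : uncurry f = {p : ℝ × ℝ | p.2 ≤ p.1}.indicator (fun p => (p.1 ^ 2)⁻¹ * w p.2) := by
    funext p
    simp only [uncurry, hfdef, Set.indicator_apply, mem_setOf_eq]
  have hf_asm : AEStronglyMeasurable (uncurry f) (μ.prod μ) := by
    rw [hf_eq]
    exact AEStronglyMeasurable.indicator
      ((measurable_fst.pow_const 2).inv.aestronglyMeasurable.mul hwa.comp_snd)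
      (measurableSet_le measurable_snd measurable_fst)
  have hprodr : μ.prod μ = (volume.prod volume).restrict (Ioc a b ×ˢ Ioc a b) :=
    Measure.prod_restrict _ _
  have hf_int : Integrable (uncurry f) (μ.prod μ) := by
    apply Integrable.mono' (g := fun p : ℝ × ℝ => (a ^ 2)⁻¹ • |w p.2|) ?_ hf_asm
    · rw [hprodr]
      filter_upwards [ae_restrict_mem (measurableSet_Ioc.prod measurableSet_Ioc)] with p hp
      rcases hp with ⟨hp1, _⟩
      rw [hf_eq]
      rw [Set.indicator_apply]
      split_ifs with h
      · rw [Real.norm_eq_abs, abs_mul, smul_eq_mul, abs_inv, abs_pow,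
          abs_of_pos (lt_trans ha hp1.1)]
        have h2 : (p.1 ^ 2)⁻¹ ≤ (a ^ 2)⁻¹ := by
          apply inv_anti₀ (by positivity)
          nlinarith [hp1.1]
        exact mul_le_mul_of_nonneg_right h2 (abs_nonneg _)
      · simp only [norm_zero, smul_eq_mul]
        positivity
    · exact Integrable.smul_prod (integrable_const (μ := μ) ((a ^ 2)⁻¹ : ℝ)) (wI w hwInt ha).abs
  have hinner1 : ∀ t ∈ Ioc a b, (∫ r, f t r ∂μ) = (t ^ 2)⁻¹ * ∫ r in Ioc a t, w r := by
    intro t ht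
    have h1 : (fun r => f t r) = (Iic t).indicator (fun r => (t ^ 2)⁻¹ * w r) := by
      funext r; simp only [hfdef, Set.indicator_apply, mem_Iic]
    have h2 : Iic t ∩ Ioc a b = Ioc a t := by
      ext x
      simp only [mem_inter_iff, mem_Iic, mem_Ioc]
      exact ⟨fun ⟨h1, h2, _⟩ => ⟨h2, h1⟩, fun ⟨h1, h2⟩ => ⟨h2, h1, h2.trans ht.2⟩⟩
    rw [h1, integral_indicator measurableSet_Iic, hμ,
      Measure.restrict_restrict measurableSet_Iic, h2, integral_const_mul]
  have hinner2 : ∀ r ∈ Ioc a b, (∫ t, f t r ∂μ) = (r⁻¹ - b⁻¹) * w r := by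
    intro r hr
    have h1 : (fun t => f t r) = (Ici r).indicator (fun t => (t ^ 2)⁻¹ * w r) := by
      funext t; simp only [hfdef, Set.indicator_apply, mem_Ici]
    have h2 : Ici r ∩ Ioc a b = Icc r b := by
      ext x
      simp only [mem_inter_iff, mem_Ici, mem_Ioc, mem_Icc]
      exact ⟨fun ⟨h1, _, h3⟩ => ⟨h1, h3⟩, fun ⟨h1, h2⟩ => ⟨h1, lt_of_lt_of_le hr.1 h1, h2⟩⟩
    rw [h1, integral_indicator measurableSet_Ici, hμ,
      Measure.restrict_restrict measurableSet_Ici, h2, integral_Icc_eq_integral_Ioc,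
      integral_mul_const, integral_inv_sq_Ioc (ha.trans hr.1) hr.2]
  -- integrability of the three pieces
  have hI1 : Integrable (fun t => F a * (t ^ 2)⁻¹) μ := by
    apply Integrable.mono' (g := fun _ => |F a| * (a ^ 2)⁻¹)
      (integrable_const _)
      ((measurable_id.pow_const 2).inv.aestronglyMeasurable.const_mul _)
    rw [hμ]
    filter_upwards [ae_restrict_mem measurableSet_Ioc] with t ht
    simp only [id_eq, Pi.inv_apply]
    rw [Real.norm_eq_abs, abs_mul, abs_inv, abs_pow, abs_of_pos (lt_trans ha ht.1)]
    have h2 : (t ^ 2)⁻¹ ≤ (a ^ 2)⁻¹ := by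
      apply inv_anti₀ (by positivity)
      nlinarith [ht.1]
    exact mul_le_mul_of_nonneg_left h2 (abs_nonneg _)
  have hI2 : Integrable (fun t => ∫ r, f t r ∂μ) μ := hf_int.integral_prod_left
  have hI3 : Integrable (fun t => w t * t⁻¹) μ := by
    have hm : AEStronglyMeasurable (fun t => w t * t⁻¹) μ :=
      hwa.mul measurable_inv.aestronglyMeasurable
    apply Integrable.mono' (g := fun t => |w t| * a⁻¹)
      (((wI w hwInt ha).abs.mul_const _)) hm
    filter_upwards [ae_restrict_mem measurableSet_Ioc] with t ht
    rw [Real.norm_eq_abs, abs_mul, abs_inv]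
    rw [abs_of_pos (lt_trans ha ht.1)]
    have h2 : t⁻¹ ≤ a⁻¹ := inv_anti₀ ha ht.1.le
    exact mul_le_mul_of_nonneg_left h2 (abs_nonneg _)
  -- rewrite the integrand
  have hcongr : ∫ t in Ioc a b, (Pav w t - w t) / t =
      ∫ t in Ioc a b, (F a * (t ^ 2)⁻¹ + (∫ r, f t r ∂μ) - w t * t⁻¹) := by
    apply setIntegral_congr_fun measurableSet_Ioc
    intro t ht
    dsimp only
    have ht0 : t ≠ 0 := (lt_trans ha ht.1).ne'
    rw [hinner1 t ht, hPavF, hFsplit t ht.1.le]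
    field_simp
  rw [hcongr]
  have hI12 : Integrable (fun t => F a * (t ^ 2)⁻¹ + ∫ r, f t r ∂μ) μ := hI1.add hI2
  rw [integral_sub hI12 hI3, integral_add hI1 hI2]
  have hv1 : ∫ t, F a * (t ^ 2)⁻¹ ∂μ = F a * (a⁻¹ - b⁻¹) := by
    rw [integral_const_mul, hμ, integral_inv_sq_Ioc ha hab]
  have hIwr : Integrable (fun r => w r * r⁻¹) μ := hI3
  have hv2 : ∫ t, (∫ r, f t r ∂μ) ∂μ = (∫ r, w r * r⁻¹ ∂μ) - b⁻¹ * (F b - F a) := by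
    rw [integral_integral_swap hf_int]
    have : ∫ r, (∫ t, f t r ∂μ) ∂μ = ∫ r in Ioc a b, (w r * r⁻¹ - b⁻¹ * w r) := by
      rw [hμ]
      apply setIntegral_congr_fun measurableSet_Ioc
      intro r hr
      dsimp only
      rw [hinner2 r hr]
      ring
    rw [this, integral_sub hIwr ((wI w hwInt ha).const_mul _), integral_const_mul]
    have : ∫ r in Ioc a b, w r = F b - F a := by
      rw [hFsplit b hab]; ring
    rw [this]
  rw [hv1, hv2, hPavF a, hPavF b]
  field_simp
  ring

lemma pav_cont (w : ℝ → ℝ) (hwInt : ∀ t > (0 : ℝ), IntegrableOn w (Ioo 0 t)) :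
    ContinuousOn (Pav w) (Ioi 0) := by
  have hF : ∀ t ∈ Ioi (0:ℝ), ContinuousAt (fun x => ∫ s in Ioo (0:ℝ) x, w s) t := by
    intro t ht
    have hint : IntegrableOn w (Icc 0 (t + 1)) := by
      rw [integrableOn_Icc_iff_integrableOn_Ioo]
      exact hwInt (t + 1) (by simp only [mem_Ioi] at ht; linarith)
    have hcont := intervalIntegral.continuousOn_primitive (f := w) (μ := volume) hint
    have heq : ∀ x, ∫ s in Ioc (0:ℝ) x, w s = ∫ s in Ioo (0:ℝ) x, w s := fun x =>
      integral_Ioc_eq_integral_Ioo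
    have : ContinuousOn (fun x => ∫ s in Ioo (0:ℝ) x, w s) (Icc 0 (t+1)) := by
      refine ContinuousOn.congr hcont fun x _ => (heq x).symm
    refine ContinuousWithinAt.continuousAt (this t ?_) ?_
    · simp only [mem_Ioi] at ht; exact ⟨ht.le, by linarith⟩
    · refine Icc_mem_nhds ?_ ?_ <;> simp only [mem_Ioi] at ht <;> linarith
  intro t ht
  exact ((continuousAt_const.div continuousAt_id (ne_of_gt (mem_Ioi.mp ht))).mul (hF t ht)).continuousWithinAt

/-- Integration by parts: under the cancellation `∫₀^∞ u(s) ds/s = 0`,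
`∫₀^∞ Pw(s) u(s) ds/s = ∫₀^∞ (Pw(t) − w(t)) (∫₀ᵗ u(s) ds/s) dt/t`. -/
theorem integration_by_parts_Pw {E : Type*} [NormedAddCommGroup E] [NormedSpace ℝ E]
    [CompleteSpace E] (u : ℝ → E) (w : ℝ → ℝ) (C : ℝ)
    (hu_meas : AEStronglyMeasurable u (volume.restrict (Ioi 0)))
    (hu_int : IntegrableOn (fun s => (1 + |Real.log s|) * ‖u s‖ / s) (Ioi 0))
    (hu_cancel : ∫ s in Ioi (0 : ℝ), s⁻¹ • u s = 0)
    (hwInt : ∀ t > (0 : ℝ), IntegrableOn w (Ioo 0 t))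
    (hW : ∀ t > (0 : ℝ), |Pav w t - w t| ≤ C) :
    IntegrableOn (fun s => (Pav w s / s) • u s) (Ioi 0) ∧
    IntegrableOn
      (fun t => ((Pav w t - w t) / t) • ∫ s in Ioo (0 : ℝ) t, s⁻¹ • u s) (Ioi 0) ∧
    ∫ s in Ioi (0 : ℝ), (Pav w s / s) • u s =
      ∫ t in Ioi (0 : ℝ), ((Pav w t - w t) / t) • ∫ s in Ioo (0 : ℝ) t, s⁻¹ • u s := by
  have hC : 0 ≤ C := le_trans (abs_nonneg _) (hW 1 one_pos)
  set v : ℝ → E := fun s => s⁻¹ • u s with hv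
  set U : ℝ → E := fun t => ∫ s in Ioo (0 : ℝ) t, v s with hUdef
  set g : ℝ → ℝ := fun t => (Pav w t - w t) / t with hgdef
  -- measurability
  have hw_meas := w_asm w hwInt
  have hPav_asm : AEStronglyMeasurable (Pav w) (volume.restrict (Ioi 0)) :=
    (pav_cont w hwInt).aestronglyMeasurable measurableSet_Ioi
  have hg_asm' : AEStronglyMeasurable (fun t => (Pav w t - w t) / t)
      (volume.restrict (Ioi 0)) := by
    have h1 := AEStronglyMeasurable.mul (hPav_asm.sub hw_meas)
      (measurable_inv.aestronglyMeasurable (μ := volume.restrict (Ioi 0)))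
    apply h1.congr
    filter_upwards with t
    simp [div_eq_mul_inv]
  have hg_asm : AEStronglyMeasurable g (volume.restrict (Ioi 0)) := hg_asm'

  have hv_meas : AEStronglyMeasurable v (volume.restrict (Ioi 0)) :=
    (measurable_inv.aestronglyMeasurable).smul hu_meas
  -- basic integrability
  have hnorm_v : ∀ s ∈ Ioi (0:ℝ), ‖v s‖ = ‖u s‖ / s := by
    intro s hs
    rw [hv]
    rw [norm_smul, Real.norm_eq_abs, abs_inv, abs_of_pos (mem_Ioi.mp hs), div_eq_mul_inv,
      mul_comm]
  have hv_int : IntegrableOn v (Ioi 0) := by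
    apply Integrable.mono' hu_int hv_meas
    filter_upwards [ae_restrict_mem measurableSet_Ioi] with s hs
    rw [hnorm_v s hs]
    have hs0 : (0:ℝ) < s := hs
    gcongr
    nlinarith [abs_nonneg (log s), norm_nonneg (u s)]
  -- integrability of g on intervals away from 0
  have hg_int : ∀ {a b : ℝ}, 0 < a → IntegrableOn g (Ioc a b) := by
    intro a b ha
    apply Integrable.mono' (g := fun _ => C * a⁻¹)
      (integrableOn_const measure_Ioc_lt_top.ne)
      (hg_asm.mono_measure (Measure.restrict_mono (fun x hx => lt_trans ha hx.1) le_rfl))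
    filter_upwards [ae_restrict_mem measurableSet_Ioc] with t ht
    have ht0 : 0 < t := lt_trans ha ht.1
    rw [Real.norm_eq_abs, hgdef]
    rw [abs_div, abs_of_pos ht0, div_eq_mul_inv]
    exact mul_le_mul (hW t ht0) (inv_anti₀ ha ht.1.le) (by positivity) hC
  -- bound for the integral of |g|
  have habs : ∀ {a b : ℝ}, 0 < a → a ≤ b → ∫ t in Ioc a b, |g t| ≤ C * (log b - log a) := by
    intro a b ha hab
    have hb : 0 < b := lt_of_lt_of_le ha hab
    have hCi : IntegrableOn (fun t : ℝ => C * t⁻¹) (Ioc a b) := by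
      apply IntegrableOn.mono_set _ Ioc_subset_Icc_self
      apply ContinuousOn.integrableOn_Icc
      exact continuousOn_const.mul (continuousOn_id.inv₀ (fun x hx =>
        (lt_of_lt_of_le ha hx.1).ne'))
    have h1 : ∫ t in Ioc a b, |g t| ≤ ∫ t in Ioc a b, C * t⁻¹ := by
      apply setIntegral_mono_on (hg_int ha).abs hCi measurableSet_Ioc
      intro t ht
      have ht0 : 0 < t := lt_trans ha ht.1
      rw [hgdef, abs_div, abs_of_pos ht0, div_eq_mul_inv]
      exact mul_le_mul_of_nonneg_right (hW t ht0) (by positivity)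
    calc ∫ t in Ioc a b, |g t| ≤ ∫ t in Ioc a b, C * t⁻¹ := h1
      _ = C * (log b - log a) := by rw [integral_const_mul, integral_inv_Ioc ha hab]
  -- pointwise bound on Pav
  have hpk : ∀ {a b : ℝ}, 0 < a → a ≤ b → ∫ t in Ioc a b, g t = Pav w a - Pav w b :=
    fun ha hab => pav_key w hwInt ha hab
  have habs_int : ∀ {a b : ℝ}, 0 < a →
      |∫ t in Ioc a b, g t| ≤ ∫ t in Ioc a b, |g t| := by
    intro a b ha
    simpa [Real.norm_eq_abs] using
      norm_integral_le_integral_norm (μ := volume.restrict (Ioc a b)) g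
  have hPav_bd : ∀ s : ℝ, 0 < s → |Pav w s| ≤ |Pav w 1| + C * |log s| := by
    intro s hs
    rcases le_or_gt s 1 with h | h
    · have hk := hpk hs h
      have h2 : |∫ t in Ioc s 1, g t| ≤ C * (log 1 - log s) :=
        le_trans (habs_int hs) (habs hs h)
      rw [hk] at h2
      have hL : |log s| = -log s := abs_of_nonpos (log_nonpos hs.le h)
      rw [log_one] at h2
      have h3 : |Pav w s| - |Pav w 1| ≤ |Pav w s - Pav w 1| := abs_sub_abs_le_abs_sub _ _
      rw [hL]
      linarith
    · have hk := hpk one_pos h.le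
      have h2 : |∫ t in Ioc 1 s, g t| ≤ C * (log s - log 1) :=
        le_trans (habs_int one_pos) (habs one_pos h.le)
      rw [hk] at h2
      have hL : |log s| = log s := abs_of_nonneg (log_nonneg h.le)
      rw [log_one] at h2
      have h3 : |Pav w s| - |Pav w 1| ≤ |Pav w s - Pav w 1| := abs_sub_abs_le_abs_sub _ _
      rw [hL]
      linarith [abs_sub_comm (Pav w s) (Pav w 1)]
  -- FIRST CONCLUSION
  have hps : (fun s => (Pav w s / s) • u s) = (fun s => Pav w s • v s) := by
    funext s
    rw [hv, div_eq_mul_inv, mul_smul]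
  have hint1 : IntegrableOn (fun s => (Pav w s / s) • u s) (Ioi 0) := by
    have hasm : AEStronglyMeasurable (fun s => (Pav w s / s) • u s)
        (volume.restrict (Ioi 0)) := by
      have h1 : AEStronglyMeasurable (fun s => Pav w s * s⁻¹) (volume.restrict (Ioi 0)) :=
        hPav_asm.mul measurable_inv.aestronglyMeasurable
      have h2 := h1.smul hu_meas
      apply h2.congr
      filter_upwards with s
      rw [div_eq_mul_inv]
      rfl
    apply Integrable.mono' (hu_int.const_mul (|Pav w 1| + C)) hasm
    filter_upwards [ae_restrict_mem measurableSet_Ioi] with s hs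
    have hs0 : (0:ℝ) < s := hs
    rw [norm_smul, Real.norm_eq_abs, abs_div, abs_of_pos hs0]
    have hb1 : |Pav w s| ≤ (|Pav w 1| + C) * (1 + |log s|) := by
      have := hPav_bd s hs0
      nlinarith [abs_nonneg (log s), abs_nonneg (Pav w 1)]
    calc |Pav w s| / s * ‖u s‖ = |Pav w s| * ‖u s‖ / s := by ring
      _ ≤ ((|Pav w 1| + C) * (1 + |log s|)) * ‖u s‖ / s := by
          gcongr
      _ = (|Pav w 1| + C) * ((1 + |log s|) * ‖u s‖ / s) := by ring
  -- U facts
  have hU_Ioc : ∀ t : ℝ, U t = ∫ s in Ioc (0:ℝ) t, v s := by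
    intro t; rw [hUdef]; exact integral_Ioc_eq_integral_Ioo.symm
  have hU_tail : ∀ t : ℝ, 0 < t → ∫ s in Ioi t, v s = - U t := by
    intro t ht
    have h1 : ∫ s in Ioi (0:ℝ), v s = (∫ s in Ioc 0 t, v s) + ∫ s in Ioi t, v s := by
      rw [← setIntegral_union (Ioc_disjoint_Ioi le_rfl) measurableSet_Ioi
        (hv_int.mono_set (fun x hx => hx.1)) (hv_int.mono_set (fun x hx => lt_trans ht hx)),
        Ioc_union_Ioi_eq_Ioi ht.le]
    have h0 : ∫ s in Ioi (0:ℝ), v s = 0 := hu_cancel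
    rw [h0, ← hU_Ioc t] at h1
    exact eq_neg_of_add_eq_zero_right h1.symm
  -- ==================== Fubini block 1 : (0,1] ====================
  have h011 : Ioc (0:ℝ) 1 ⊆ Ioi 0 := fun x hx => hx.1
  set μ1 := volume.restrict (Ioc (0:ℝ) 1) with hμ1
  have hmono1 : μ1 ≤ volume.restrict (Ioi 0) := Measure.restrict_mono h011 le_rfl
  set f1 : ℝ → ℝ → E := fun t s => if s < t then g t • v s else 0 with hf1def
  have hf1_eq : uncurry f1 = {p : ℝ × ℝ | p.2 < p.1}.indicator (fun p => g p.1 • v p.2) := by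
    funext p
    simp only [uncurry, hf1def, Set.indicator_apply, mem_setOf_eq]
  have hf1_asm : AEStronglyMeasurable (uncurry f1) (μ1.prod μ1) := by
    rw [hf1_eq]
    exact AEStronglyMeasurable.indicator
      ((hg_asm.mono_measure hmono1).comp_fst.smul (hv_meas.mono_measure hmono1).comp_snd)
      (measurableSet_lt measurable_snd measurable_fst)
  have hnormf1 : ∀ s t : ℝ, ‖f1 t s‖ = (Ioi s).indicator (fun t => |g t| * ‖v s‖) t := by
    intro s t
    simp only [hf1def, Set.indicator_apply, mem_Ioi]
    split_ifs with h
    · rw [norm_smul, Real.norm_eq_abs]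
    · rw [norm_zero]
  have hIoiIoc : ∀ s : ℝ, 0 < s → Ioi s ∩ Ioc 0 1 = Ioc s 1 := by
    intro s hs
    ext x
    simp only [mem_inter_iff, mem_Ioi, mem_Ioc]
    exact ⟨fun ⟨h1, _, h3⟩ => ⟨h1, h3⟩, fun ⟨h1, h2⟩ => ⟨h1, lt_trans hs h1, h2⟩⟩
  have hf1_int : Integrable (uncurry f1) (μ1.prod μ1) := by
    rw [integrable_prod_iff' hf1_asm]
    constructor
    · rw [hμ1]
      filter_upwards [ae_restrict_mem measurableSet_Ioc] with s hs
      have he : (fun t => uncurry f1 (t, s)) = (Ioi s).indicator (fun t => g t • v s) := by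
        funext t
        simp only [uncurry, hf1def, Set.indicator_apply, mem_Ioi]
      rw [he, integrable_indicator_iff measurableSet_Ioi]
      have hre : μ1.restrict (Ioi s) = volume.restrict (Ioc s 1) := by
        rw [hμ1, Measure.restrict_restrict measurableSet_Ioi, hIoiIoc s hs.1]
      show Integrable (fun t => g t • v s) (μ1.restrict (Ioi s))
      rw [hre]
      exact (hg_int hs.1).smul_const (v s)
    · apply Integrable.mono' (((hu_int.mono_set h011).const_mul C))
      · exact (hf1_asm.norm.prod_swap).integral_prod_right'
      · rw [hμ1]
        filter_upwards [ae_restrict_mem measurableSet_Ioc] with s hs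
        have hcalc : ∫ t, ‖uncurry f1 (t, s)‖ ∂μ1 = (∫ t in Ioc s 1, |g t|) * ‖v s‖ := by
          have he : (fun t => ‖uncurry f1 (t, s)‖)
              = (Ioi s).indicator (fun t => |g t| * ‖v s‖) := funext fun t => hnormf1 s t
          rw [he, integral_indicator measurableSet_Ioi, hμ1,
            Measure.restrict_restrict measurableSet_Ioi, hIoiIoc s hs.1, integral_mul_const]
        rw [Real.norm_eq_abs, abs_of_nonneg (integral_nonneg (fun t => norm_nonneg _)), hcalc]
        have h2 : (∫ t in Ioc s 1, |g t|) * ‖v s‖ ≤ (C * (log 1 - log s)) * ‖v s‖ :=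
          mul_le_mul_of_nonneg_right (habs hs.1 hs.2) (norm_nonneg _)
        have hL : |log s| = -log s := abs_of_nonpos (log_nonpos hs.1.le hs.2)
        rw [hnorm_v s hs.1] at h2 ⊢
        rw [log_one] at h2
        calc (∫ t in Ioc s 1, |g t|) * (‖u s‖ / s) ≤ (C * (0 - log s)) * (‖u s‖ / s) := h2
          _ ≤ C * ((1 + |log s|) * ‖u s‖ / s) := by
              rw [mul_div_assoc, hL]
              have hpos : 0 ≤ ‖u s‖ / s := div_nonneg (norm_nonneg _) hs.1.le
              nlinarith [mul_nonneg hC hpos]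
  have hIioIoc : ∀ t : ℝ, t ≤ 1 → Iio t ∩ Ioc 0 1 = Ioo 0 t := by
    intro t ht1
    ext x
    simp only [mem_inter_iff, mem_Iio, mem_Ioc, mem_Ioo]
    exact ⟨fun ⟨h1, h2, _⟩ => ⟨h2, h1⟩, fun ⟨h1, h2⟩ => ⟨h2, h1, le_trans h2.le ht1⟩⟩
  have hmarg1t : ∀ t ∈ Ioc (0:ℝ) 1, ∫ s, f1 t s ∂μ1 = g t • U t := by
    intro t ht
    have he : (fun s => f1 t s) = (Iio t).indicator (fun s => g t • v s) := by
      funext s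
      simp only [hf1def, Set.indicator_apply, mem_Iio]
    rw [he, integral_indicator measurableSet_Iio, hμ1,
      Measure.restrict_restrict measurableSet_Iio, hIioIoc t ht.2, integral_smul, hUdef]
  have hmarg1s : ∀ s ∈ Ioc (0:ℝ) 1, ∫ t, f1 t s ∂μ1 = (∫ t in Ioc s 1, g t) • v s := by
    intro s hs
    have he : (fun t => f1 t s) = (Ioi s).indicator (fun t => g t • v s) := by
      funext t
      simp only [hf1def, Set.indicator_apply, mem_Ioi]
    rw [he, integral_indicator measurableSet_Ioi, hμ1,
      Measure.restrict_restrict measurableSet_Ioi, hIoiIoc s hs.1, integral_smul_const]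
  have hUint1 : IntegrableOn (fun t => g t • U t) (Ioc 0 1) := by
    apply (hf1_int.integral_prod_left).congr
    rw [hμ1]
    filter_upwards [ae_restrict_mem measurableSet_Ioc] with t ht
    exact hmarg1t t ht
  have hvs1 : IntegrableOn (fun s => (∫ t in Ioc s 1, g t) • v s) (Ioc 0 1) := by
    apply (hf1_int.integral_prod_right).congr
    rw [hμ1]
    filter_upwards [ae_restrict_mem measurableSet_Ioc] with s hs
    exact hmarg1s s hs
  have hL3a : ∫ t in Ioc (0:ℝ) 1, g t • U t
      = ∫ s in Ioc (0:ℝ) 1, (∫ t in Ioc s 1, g t) • v s := by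
    have e1 : ∫ t in Ioc (0:ℝ) 1, g t • U t = ∫ t, (∫ s, f1 t s ∂μ1) ∂μ1 :=
      (setIntegral_congr_fun measurableSet_Ioc hmarg1t).symm
    have e2 : ∫ s, (∫ t, f1 t s ∂μ1) ∂μ1 = ∫ s in Ioc (0:ℝ) 1, (∫ t in Ioc s 1, g t) • v s :=
      setIntegral_congr_fun measurableSet_Ioc hmarg1s
    rw [e1, integral_integral_swap hf1_int, e2]
  -- ==================== Fubini block 2 : (1,∞) ====================
  have h1i : Ioi (1:ℝ) ⊆ Ioi 0 := fun x hx => mem_Ioi.mpr (lt_trans one_pos (mem_Ioi.mp hx))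
  set μ2 := volume.restrict (Ioi (1:ℝ)) with hμ2
  have hmono2 : μ2 ≤ volume.restrict (Ioi 0) := Measure.restrict_mono h1i le_rfl
  set f2 : ℝ → ℝ → E := fun t s => if t ≤ s then g t • v s else 0 with hf2def
  have hf2_eq : uncurry f2 = {p : ℝ × ℝ | p.1 ≤ p.2}.indicator (fun p => g p.1 • v p.2) := by
    funext p
    simp only [uncurry, hf2def, Set.indicator_apply, mem_setOf_eq]
  have hf2_asm : AEStronglyMeasurable (uncurry f2) (μ2.prod μ2) := by
    rw [hf2_eq]
    exact AEStronglyMeasurable.indicator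
      ((hg_asm.mono_measure hmono2).comp_fst.smul (hv_meas.mono_measure hmono2).comp_snd)
      (measurableSet_le measurable_fst measurable_snd)
  have hIicIoi : ∀ s : ℝ, 1 < s → Iic s ∩ Ioi 1 = Ioc 1 s := by
    intro s hs
    ext x
    simp only [mem_inter_iff, mem_Iic, mem_Ioi, mem_Ioc]
    exact ⟨fun ⟨h1, h2⟩ => ⟨h2, h1⟩, fun ⟨h1, h2⟩ => ⟨h2, h1⟩⟩
  have hf2_int : Integrable (uncurry f2) (μ2.prod μ2) := by
    rw [integrable_prod_iff' hf2_asm]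
    constructor
    · rw [hμ2]
      filter_upwards [ae_restrict_mem measurableSet_Ioi] with s hs
      have he : (fun t => uncurry f2 (t, s)) = (Iic s).indicator (fun t => g t • v s) := by
        funext t
        simp only [uncurry, hf2def, Set.indicator_apply, mem_Iic]
      rw [he, integrable_indicator_iff measurableSet_Iic]
      have hre : μ2.restrict (Iic s) = volume.restrict (Ioc 1 s) := by
        rw [hμ2, Measure.restrict_restrict measurableSet_Iic, hIicIoi s hs]
      show Integrable (fun t => g t • v s) (μ2.restrict (Iic s))
      rw [hre]
      exact (hg_int one_pos).smul_const (v s)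
    · apply Integrable.mono' (((hu_int.mono_set h1i).const_mul C))
      · exact (hf2_asm.norm.prod_swap).integral_prod_right'
      · rw [hμ2]
        filter_upwards [ae_restrict_mem measurableSet_Ioi] with s hs
        have hs0 : (0:ℝ) < s := lt_trans one_pos hs
        have hcalc : ∫ t, ‖uncurry f2 (t, s)‖ ∂μ2 = (∫ t in Ioc 1 s, |g t|) * ‖v s‖ := by
          have he : (fun t => ‖uncurry f2 (t, s)‖)
              = (Iic s).indicator (fun t => |g t| * ‖v s‖) := by
            funext t
            simp only [uncurry, hf2def, Set.indicator_apply, mem_Iic]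
            split_ifs with h
            · rw [norm_smul, Real.norm_eq_abs]
            · rw [norm_zero]
          rw [he, integral_indicator measurableSet_Iic, hμ2,
            Measure.restrict_restrict measurableSet_Iic, hIicIoi s hs, integral_mul_const]
        rw [Real.norm_eq_abs, abs_of_nonneg (integral_nonneg (fun t => norm_nonneg _)), hcalc]
        have h2 : (∫ t in Ioc 1 s, |g t|) * ‖v s‖ ≤ (C * (log s - log 1)) * ‖v s‖ :=
          mul_le_mul_of_nonneg_right (habs one_pos hs.le) (norm_nonneg _)
        have hL : |log s| = log s := abs_of_nonneg (log_nonneg hs.le)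
        rw [hnorm_v s hs0] at h2 ⊢
        rw [log_one] at h2
        calc (∫ t in Ioc 1 s, |g t|) * (‖u s‖ / s) ≤ (C * (log s - 0)) * (‖u s‖ / s) := h2
          _ ≤ C * ((1 + |log s|) * ‖u s‖ / s) := by
              rw [mul_div_assoc, hL]
              have hpos : 0 ≤ ‖u s‖ / s := div_nonneg (norm_nonneg _) hs0.le
              nlinarith [mul_nonneg hC hpos]
  have hmarg2t : ∀ t ∈ Ioi (1:ℝ), ∫ s, f2 t s ∂μ2 = -(g t • U t) := by
    intro t ht
    have he : (fun s => f2 t s) = (Ici t).indicator (fun s => g t • v s) := by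
      funext s
      simp only [hf2def, Set.indicator_apply, mem_Ici]
    have hset : Ici t ∩ Ioi 1 = Ici t := inter_eq_left.mpr (fun x hx => mem_Ioi.mpr (lt_of_lt_of_le ht hx))
    rw [he, integral_indicator measurableSet_Ici, hμ2,
      Measure.restrict_restrict measurableSet_Ici, hset, integral_Ici_eq_integral_Ioi,
      integral_smul, hU_tail t (lt_trans one_pos ht), smul_neg]
  have hmarg2s : ∀ s ∈ Ioi (1:ℝ), ∫ t, f2 t s ∂μ2 = (∫ t in Ioc 1 s, g t) • v s := by
    intro s hs
    have he : (fun t => f2 t s) = (Iic s).indicator (fun t => g t • v s) := by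
      funext t
      simp only [hf2def, Set.indicator_apply, mem_Iic]
    rw [he, integral_indicator measurableSet_Iic, hμ2,
      Measure.restrict_restrict measurableSet_Iic, hIicIoi s hs, integral_smul_const]
  have hUint2 : IntegrableOn (fun t => g t • U t) (Ioi 1) := by
    have h1 : Integrable (fun t => -(g t • U t)) μ2 := by
      apply (hf2_int.integral_prod_left).congr
      rw [hμ2]
      filter_upwards [ae_restrict_mem measurableSet_Ioi] with t ht
      exact hmarg2t t ht
    exact h1.neg.congr (Eventually.of_forall fun t => by
      simp [Pi.neg_apply, neg_neg])
  have hvs2 : IntegrableOn (fun s => (∫ t in Ioc 1 s, g t) • v s) (Ioi 1) := by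
    apply (hf2_int.integral_prod_right).congr
    rw [hμ2]
    filter_upwards [ae_restrict_mem measurableSet_Ioi] with s hs
    exact hmarg2s s hs
  have hL3b : ∫ s in Ioi (1:ℝ), (∫ t in Ioc 1 s, g t) • v s
      = - ∫ t in Ioi (1:ℝ), g t • U t := by
    have e1 : ∫ t, (∫ s, f2 t s ∂μ2) ∂μ2 = ∫ t in Ioi (1:ℝ), -(g t • U t) :=
      setIntegral_congr_fun measurableSet_Ioi hmarg2t
    have e2 : ∫ s, (∫ t, f2 t s ∂μ2) ∂μ2 = ∫ s in Ioi (1:ℝ), (∫ t in Ioc 1 s, g t) • v s :=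
      setIntegral_congr_fun measurableSet_Ioi hmarg2s
    rw [← e2, ← integral_integral_swap hf2_int, e1, integral_neg]
  -- ==================== Assemble ====================
  have hUint : IntegrableOn (fun t => g t • U t) (Ioi 0) := by
    rw [← Ioc_union_Ioi_eq_Ioi (zero_le_one (α := ℝ))]
    exact hUint1.union hUint2
  refine ⟨hint1, hUint, ?_⟩
  -- split the main integral
  have hint1' : IntegrableOn (fun s => Pav w s • v s) (Ioi 0) := by rw [← hps]; exact hint1
  have hsplit : ∫ s in Ioi (0:ℝ), Pav w s • v s
      = (∫ s in Ioc (0:ℝ) 1, Pav w s • v s) + ∫ s in Ioi (1:ℝ), Pav w s • v s := by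
    rw [← setIntegral_union (Ioc_disjoint_Ioi le_rfl) measurableSet_Ioi
      (hint1'.mono_set h011) (hint1'.mono_set h1i), Ioc_union_Ioi_eq_Ioi zero_le_one]
  have hSa : ∫ s in Ioc (0:ℝ) 1, Pav w s • v s
      = Pav w 1 • (∫ s in Ioc (0:ℝ) 1, v s) + ∫ t in Ioc (0:ℝ) 1, g t • U t := by
    have e : ∫ s in Ioc (0:ℝ) 1, Pav w s • v s
        = ∫ s in Ioc (0:ℝ) 1, (Pav w 1 • v s + (∫ t in Ioc s 1, g t) • v s) := by
      apply setIntegral_congr_fun measurableSet_Ioc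
      intro s hs
      dsimp only
      rw [← add_smul]
      congr 1
      rw [hpk hs.1 hs.2]
      ring
    have hA : Integrable (fun s => Pav w 1 • v s) μ1 := (hv_int.mono_set h011).smul (Pav w 1)
    rw [e, integral_add hA hvs1, integral_smul, hL3a]
  have hSb : ∫ s in Ioi (1:ℝ), Pav w s • v s
      = Pav w 1 • (∫ s in Ioi (1:ℝ), v s) + ∫ t in Ioi (1:ℝ), g t • U t := by
    have e : ∫ s in Ioi (1:ℝ), Pav w s • v s
        = ∫ s in Ioi (1:ℝ), (Pav w 1 • v s - (∫ t in Ioc 1 s, g t) • v s) := by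
      apply setIntegral_congr_fun measurableSet_Ioi
      intro s hs
      dsimp only
      rw [← sub_smul]
      congr 1
      rw [hpk one_pos (le_of_lt hs)]
      ring
    have hA : Integrable (fun s => Pav w 1 • v s) μ2 := (hv_int.mono_set h1i).smul (Pav w 1)
    rw [e, integral_sub hA hvs2, integral_smul, hL3b, sub_neg_eq_add]
  have hvsplit : (∫ s in Ioc (0:ℝ) 1, v s) + ∫ s in Ioi (1:ℝ), v s = 0 := by
    rw [← setIntegral_union (Ioc_disjoint_Ioi le_rfl) measurableSet_Ioi
      (hv_int.mono_set h011) (hv_int.mono_set h1i), Ioc_union_Ioi_eq_Ioi zero_le_one]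
    exact hu_cancel
  have hgUsplit : ∫ t in Ioi (0:ℝ), g t • U t
      = (∫ t in Ioc (0:ℝ) 1, g t • U t) + ∫ t in Ioi (1:ℝ), g t • U t := by
    rw [← setIntegral_union (Ioc_disjoint_Ioi le_rfl) measurableSet_Ioi hUint1 hUint2,
      Ioc_union_Ioi_eq_Ioi zero_le_one]
  calc ∫ s in Ioi (0:ℝ), (Pav w s / s) • u s = ∫ s in Ioi (0:ℝ), Pav w s • v s := by rw [hps]
    _ = (∫ s in Ioc (0:ℝ) 1, Pav w s • v s) + ∫ s in Ioi (1:ℝ), Pav w s • v s := hsplit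
    _ = Pav w 1 • ((∫ s in Ioc (0:ℝ) 1, v s) + ∫ s in Ioi (1:ℝ), v s)
        + ((∫ t in Ioc (0:ℝ) 1, g t • U t) + ∫ t in Ioi (1:ℝ), g t • U t) := by
        rw [hSa, hSb, smul_add]; abel
    _ = ∫ t in Ioi (0:ℝ), g t • U t := by
        rw [hvsplit, smul_zero, zero_add, ← hgUsplit]
end

section
/- Let E be a real Banach space and let u : (0,∞) → E be strongly measurable with ∫₀^∞ (1 + |log s|)²·‖u(s)‖ ds/s < ∞, ∫₀^∞ u(s) ds/s = 0, and ∫₀^∞ Pw(s)·u(s) ds/s = 0 (Bochner integrals). Let w : (0,∞) → ℝ be integrable on (0,t) for every t > 0 with ‖w‖_W := sup_{t>0} |Pw(t) − w(t)| < ∞. Then Pw(t)·∫₀ᵗ Pw(s)·u(s) ds/s → 0 in E both as t → 0⁺ and as t → ∞. -/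
open MeasureTheory Set Real Filter Topology

section aux
variable {w : ℝ → ℝ}

lemma aux_indicator_intInt (hwInt : ∀ t > (0 : ℝ), IntegrableOn w (Ioo 0 t)) (a b : ℝ) :
    IntervalIntegrable ((Ioi (0:ℝ)).indicator w) volume a b := by
  rw [intervalIntegrable_iff, IntegrableOn, integrable_indicator_iff measurableSet_Ioi,
    IntegrableOn, Measure.restrict_restrict measurableSet_Ioi]
  have hT : (0:ℝ) < max (max a b) 0 + 1 := by positivity
  refine (hwInt _ hT).mono_set ?_
  rintro x ⟨hx1, hx2⟩
  have : x ≤ max a b := by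
    rcases mem_uIoc.mp hx2 with h | h
    · exact h.2.trans (le_max_right a b)
    · exact h.2.trans (le_max_left a b)
  have := le_max_left (max a b) (0:ℝ)
  simp only [mem_Ioo]
  constructor <;> linarith [mem_Ioi.mp hx1]

lemma aux_cont_primitive (hwInt : ∀ t > (0 : ℝ), IntegrableOn w (Ioo 0 t)) :
    Continuous (fun t => ∫ x in (0:ℝ)..t, (Ioi (0:ℝ)).indicator w x) :=
  intervalIntegral.continuous_primitive (fun a b => aux_indicator_intInt hwInt a b) 0

lemma aux_G_eq (hwInt : ∀ t > (0 : ℝ), IntegrableOn w (Ioo 0 t)) {t : ℝ} (ht : 0 < t) :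
    (∫ s in Ioo (0:ℝ) t, w s) = ∫ x in (0:ℝ)..t, (Ioi (0:ℝ)).indicator w x := by
  rw [intervalIntegral.integral_of_le ht.le, integral_Ioc_eq_integral_Ioo]
  exact (setIntegral_congr_fun measurableSet_Ioo
    (fun x hx => (indicator_of_mem (mem_Ioi.mpr hx.1) w).symm))

end aux

lemma aux_identity (hwInt : ∀ t > (0 : ℝ), IntegrableOn w (Ioo 0 t))
    {a b : ℝ} (ha : 0 < a) (hab : a < b) :
    Pav w b - Pav w a = ∫ s in Ioc a b, (w s - Pav w s) / s := by
  have hb : 0 < b := ha.trans hab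
  set G : ℝ → ℝ := fun t => ∫ s in Ioo (0:ℝ) t, w s with hG
  set μ := volume.restrict (Ioc a b) with hμ
  set ν := volume.restrict (Ioo (0:ℝ) b) with hν
  set f : ℝ → ℝ → ℝ := fun s r => (Ioo (0:ℝ) s).indicator w r * (s^2)⁻¹ with hf
  have hw_b : Integrable w ν := hwInt b hb
  have hw_ab : Integrable w μ := by
    refine (hwInt (b+1) (by linarith)).mono_set (fun x hx => ?_)
    exact ⟨ha.trans hx.1, lt_of_le_of_lt hx.2 (by linarith)⟩
  -- measurability of uncurry f
  have hSmeas : MeasurableSet {p : ℝ × ℝ | 0 < p.2 ∧ p.2 < p.1} :=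
    (measurableSet_lt measurable_const measurable_snd).inter
      (measurableSet_lt measurable_snd measurable_fst)
  have hmeas : AEStronglyMeasurable (Function.uncurry f) (μ.prod ν) := by
    have : Function.uncurry f = fun p : ℝ × ℝ =>
        ({p : ℝ × ℝ | 0 < p.2 ∧ p.2 < p.1}).indicator
          (fun p => w p.2 * (p.1^2)⁻¹) p := by
      funext p
      by_cases h : p.2 ∈ Ioo (0:ℝ) p.1
      · simp [Function.uncurry, hf, indicator_of_mem h,
          indicator_of_mem (show p ∈ {p : ℝ × ℝ | 0 < p.2 ∧ p.2 < p.1} from ⟨h.1, h.2⟩)]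
      · simp [Function.uncurry, hf, indicator_of_notMem h,
          indicator_of_notMem (show p ∉ {p : ℝ × ℝ | 0 < p.2 ∧ p.2 < p.1} from h)]
    rw [this]
    exact (hw_b.aestronglyMeasurable.comp_snd.mul
      ((measurable_fst.pow_const 2).inv.aestronglyMeasurable)).indicator hSmeas
  -- integrability of uncurry f
  have hint : Integrable (Function.uncurry f) (μ.prod ν) := by
    refine Integrable.mono' (g := fun p : ℝ × ℝ => (a^2)⁻¹ * |w p.2|) ?_ hmeas ?_
    · exact Integrable.mul_prod (integrable_const (μ := μ) _) hw_b.abs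
    · rw [hμ, hν, Measure.prod_restrict]
      filter_upwards [ae_restrict_mem (measurableSet_Ioc.prod measurableSet_Ioo)] with p hp
      have hp1 : a < p.1 := hp.1.1
      have h1 : |(Ioo (0:ℝ) p.1).indicator w p.2| ≤ |w p.2| := by
        by_cases h : p.2 ∈ Ioo (0:ℝ) p.1
        · rw [indicator_of_mem h]
        · rw [indicator_of_notMem h, abs_zero]; exact abs_nonneg _
      have h2 : (p.1^2)⁻¹ ≤ (a^2)⁻¹ := by
        apply inv_anti₀ (by positivity)
        nlinarith
      calc ‖f p.1 p.2‖ = |(Ioo (0:ℝ) p.1).indicator w p.2| * |(p.1^2)⁻¹| := by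
            rw [Real.norm_eq_abs, abs_mul]
        _ ≤ |w p.2| * (a^2)⁻¹ := by
            have h3 : |(p.1^2)⁻¹| = (p.1^2)⁻¹ := abs_of_nonneg (by positivity)
            rw [h3]
            exact mul_le_mul h1 h2 (by positivity) (abs_nonneg _)
        _ = (a^2)⁻¹ * |w p.2| := mul_comm _ _
  have key := integral_integral_swap hint
  -- LHS of Fubini
  have hLHS : (∫ s, ∫ r, f s r ∂ν ∂μ) = ∫ s in Ioc a b, G s * (s^2)⁻¹ := by
    rw [hμ]
    refine setIntegral_congr_fun measurableSet_Ioc (fun s hs => ?_)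
    have : (∫ r, f s r ∂ν) = (∫ r, (Ioo (0:ℝ) s).indicator w r ∂ν) * (s^2)⁻¹ :=
      integral_mul_const _ _
    rw [this, integral_indicator measurableSet_Ioo, hν,
      Measure.restrict_restrict measurableSet_Ioo,
      inter_eq_left.mpr (Ioo_subset_Ioo_right hs.2)]
  -- inner integral of s⁻²
  have hIoc : ∀ c : ℝ, 0 < c → c ≤ b → (∫ s in Ioc c b, (s^2)⁻¹) = c⁻¹ - b⁻¹ := by
    intro c hc hcb
    rw [← intervalIntegral.integral_of_le hcb]
    have hderiv : ∀ x ∈ uIcc c b, HasDerivAt (fun y : ℝ => -y⁻¹) ((x^2)⁻¹) x := by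
      intro x hx
      rw [uIcc_of_le hcb] at hx
      have hx0 : x ≠ 0 := ne_of_gt (lt_of_lt_of_le hc hx.1)
      have h := (hasDerivAt_inv hx0).neg
      simp only [neg_neg] at h
      exact h
    have hcont : IntervalIntegrable (fun x : ℝ => (x^2)⁻¹) volume c b := by
      apply ContinuousOn.intervalIntegrable
      apply ContinuousOn.inv₀ (continuous_pow 2).continuousOn
      intro x hx
      rw [uIcc_of_le hcb] at hx
      exact pow_ne_zero 2 (ne_of_gt (lt_of_lt_of_le hc hx.1))
    rw [intervalIntegral.integral_eq_sub_of_hasDerivAt hderiv hcont]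
    ring
  -- RHS of Fubini
  have hRHS : (∫ r, ∫ s, f s r ∂μ ∂ν) = ∫ r in Ioo (0:ℝ) b, w r * ((a ⊔ r)⁻¹ - b⁻¹) := by
    rw [hν]
    refine setIntegral_congr_fun measurableSet_Ioo (fun r hr => ?_)
    have h1 : ∀ s : ℝ, f s r = (Ioi r).indicator (fun s => w r * (s^2)⁻¹) s := by
      intro s
      by_cases h : r < s
      · rw [hf]
        simp only [indicator_of_mem (mem_Ioo.mpr ⟨hr.1, h⟩),
          indicator_of_mem (mem_Ioi.mpr h)]
      · rw [hf]
        simp only [indicator_of_notMem (fun hm => h (mem_Ioo.mp hm).2),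
          indicator_of_notMem (fun hm => h (mem_Ioi.mp hm)), zero_mul]
    rw [integral_congr_ae (Eventually.of_forall h1), integral_indicator measurableSet_Ioi,
      hμ, Measure.restrict_restrict measurableSet_Ioi, Set.inter_comm (Ioi r) (Ioc a b), Ioc_inter_Ioi,
      integral_const_mul, hIoc (a ⊔ r) (lt_sup_of_lt_left ha)
        (sup_le hab.le hr.2.le)]
  -- splitting the RHS integral
  have hsplit_set : Ioo (0:ℝ) b = Ioc 0 a ∪ Ioo a b := by
    ext x
    simp only [mem_Ioo, mem_Ioc, mem_union]
    constructor
    · rintro ⟨h1, h2⟩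
      rcases le_or_gt x a with h | h
      · exact Or.inl ⟨h1, h⟩
      · exact Or.inr ⟨h, h2⟩
    · rintro (⟨h1, h2⟩ | ⟨h1, h2⟩)
      · exact ⟨h1, lt_of_le_of_lt h2 hab⟩
      · exact ⟨ha.trans h1, h2⟩
  have hdisj : Disjoint (Ioc (0:ℝ) a) (Ioo a b) := by
    rw [Set.disjoint_left]
    rintro x hx1 hx2
    exact absurd hx1.2 (not_le.mpr hx2.1)
  have hw1 : IntegrableOn w (Ioc 0 a) :=
    (hwInt b hb).mono_set (fun x hx => ⟨hx.1, lt_of_le_of_lt hx.2 hab⟩)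
  have hw2 : IntegrableOn w (Ioo a b) :=
    (hwInt b hb).mono_set (fun x hx => ⟨ha.trans hx.1, hx.2⟩)
  have hGa_Ioc : (∫ r in Ioc (0:ℝ) a, w r) = G a := by
    rw [integral_Ioc_eq_integral_Ioo]
  have hGba : (∫ r in Ioo a b, w r) = G b - G a := by
    have hGb : G b = (∫ r in Ioc (0:ℝ) a, w r) + ∫ r in Ioo a b, w r := by
      rw [hG]
      simp only
      rw [hsplit_set, setIntegral_union hdisj measurableSet_Ioo hw1 hw2]
    rw [hGa_Ioc] at hGb
    linarith
  have hwr1 : IntegrableOn (fun r => w r * r⁻¹) (Ioo a b) := by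
    refine Integrable.mono' (hw2.abs.mul_const a⁻¹)
      (hw2.aestronglyMeasurable.mul measurable_inv.aestronglyMeasurable) ?_
    filter_upwards [ae_restrict_mem measurableSet_Ioo] with r hr
    rw [Real.norm_eq_abs, abs_mul, abs_inv, abs_of_pos (ha.trans hr.1)]
    exact mul_le_mul_of_nonneg_left
      (inv_anti₀ ha (hr.1.le)) (abs_nonneg _)
  have hsplit : (∫ r in Ioo (0:ℝ) b, w r * ((a ⊔ r)⁻¹ - b⁻¹))
      = G a * (a⁻¹ - b⁻¹) + ((∫ r in Ioo a b, w r * r⁻¹) - (G b - G a) * b⁻¹) := by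
    have hφ1 : IntegrableOn (fun r => w r * ((a ⊔ r)⁻¹ - b⁻¹)) (Ioc 0 a) := by
      refine (IntegrableOn.congr_fun (hw1.mul_const (a⁻¹ - b⁻¹)) ?_ measurableSet_Ioc)
      intro r hr
      simp only [sup_eq_left.mpr hr.2]
    have hφ2 : IntegrableOn (fun r => w r * ((a ⊔ r)⁻¹ - b⁻¹)) (Ioo a b) := by
      have base : IntegrableOn (fun r => w r * (r⁻¹ - b⁻¹)) (Ioo a b) := by
        have h := hwr1.sub (hw2.mul_const b⁻¹)
        exact IntegrableOn.congr_fun h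
          (fun r _ => by simp only [Pi.sub_apply]; ring) measurableSet_Ioo
      exact base.congr_fun
        (fun r hr => by simp only [sup_eq_right.mpr hr.1.le]) measurableSet_Ioo
    rw [hsplit_set, setIntegral_union hdisj measurableSet_Ioo hφ1 hφ2]
    have e1 : (∫ r in Ioc (0:ℝ) a, w r * ((a ⊔ r)⁻¹ - b⁻¹)) = G a * (a⁻¹ - b⁻¹) := by
      have heq : EqOn (fun r => w r * ((a ⊔ r)⁻¹ - b⁻¹))
          (fun r => w r * (a⁻¹ - b⁻¹)) (Ioc 0 a) :=
        fun r hr => by simp only [sup_eq_left.mpr hr.2]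
      rw [setIntegral_congr_fun measurableSet_Ioc heq, integral_mul_const, hGa_Ioc]
    have e2 : (∫ r in Ioo a b, w r * ((a ⊔ r)⁻¹ - b⁻¹))
        = (∫ r in Ioo a b, w r * r⁻¹) - (G b - G a) * b⁻¹ := by
      have heq : EqOn (fun r => w r * ((a ⊔ r)⁻¹ - b⁻¹))
          (fun r => w r * r⁻¹ - w r * b⁻¹) (Ioo a b) :=
        fun r hr => by simp only [sup_eq_right.mpr hr.1.le]; ring
      rw [setIntegral_congr_fun measurableSet_Ioo heq,
        integral_sub hwr1 (hw2.mul_const b⁻¹), integral_mul_const, hGba]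
    rw [e1, e2]
  -- integrability on Ioc a b of the two pieces
  have hI1 : IntegrableOn (fun s => w s * s⁻¹) (Ioc a b) := by
    refine Integrable.mono' (hw_ab.abs.mul_const a⁻¹)
      (hw_ab.aestronglyMeasurable.mul measurable_inv.aestronglyMeasurable) ?_
    filter_upwards [ae_restrict_mem measurableSet_Ioc] with s hs
    rw [Real.norm_eq_abs, abs_mul, abs_inv, abs_of_pos (ha.trans hs.1)]
    exact mul_le_mul_of_nonneg_left (inv_anti₀ ha hs.1.le) (abs_nonneg _)
  have hI2 : IntegrableOn (fun s => G s * (s^2)⁻¹) (Ioc a b) := by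
    have hc : ContinuousOn
        (fun s => (∫ x in (0:ℝ)..s, (Ioi (0:ℝ)).indicator w x) * (s^2)⁻¹) (Icc a b) := by
      refine ((aux_cont_primitive hwInt).continuousOn).mul ?_
      refine ((continuous_pow 2).continuousOn).inv₀ (fun x hx => ?_)
      exact pow_ne_zero 2 (ne_of_gt (lt_of_lt_of_le ha hx.1))
    refine IntegrableOn.congr_fun
      ((hc.integrableOn_compact isCompact_Icc).mono_set Ioc_subset_Icc_self)
      (fun s hs => ?_) measurableSet_Ioc
    rw [hG]
    simp only
    rw [aux_G_eq hwInt (ha.trans hs.1)]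
  -- final assembly
  have hfinal : (∫ s in Ioc a b, (w s - Pav w s) / s)
      = (∫ s in Ioc a b, w s * s⁻¹) - ∫ s in Ioc a b, G s * (s^2)⁻¹ := by
    rw [← integral_sub hI1 hI2]
    refine setIntegral_congr_fun measurableSet_Ioc (fun s hs => ?_)
    have hs0 : s ≠ 0 := ne_of_gt (ha.trans hs.1)
    have : Pav w s = (1/s) * G s := rfl
    rw [this]
    field_simp
  have hIocIoo : (∫ s in Ioc a b, w s * s⁻¹) = ∫ s in Ioo a b, w s * s⁻¹ :=
    integral_Ioc_eq_integral_Ioo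
  have hGint : (∫ s in Ioc a b, G s * (s^2)⁻¹)
      = G a * (a⁻¹ - b⁻¹) + ((∫ r in Ioo a b, w r * r⁻¹) - (G b - G a) * b⁻¹) := by
    rw [← hLHS, key, hRHS, hsplit]
  have hPb : Pav w b = (1/b) * G b := rfl
  have hPa : Pav w a = (1/a) * G a := rfl
  rw [hfinal, hIocIoo, hGint, hPb, hPa]
  have ha0 : a ≠ 0 := ne_of_gt ha
  have hb0 : b ≠ 0 := ne_of_gt hb
  field_simp
  ring

lemma aux_log_bound (hwInt : ∀ t > (0 : ℝ), IntegrableOn w (Ioo 0 t)) {C : ℝ}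
    (hW : ∀ t > (0 : ℝ), |Pav w t - w t| ≤ C) :
    ∃ K : ℝ, 0 ≤ K ∧ ∀ t > (0:ℝ), |Pav w t| ≤ K * (1 + |Real.log t|) := by
  have hC : 0 ≤ C := le_trans (abs_nonneg _) (hW 1 one_pos)
  refine ⟨|Pav w 1| + C, by positivity, fun t ht => ?_⟩
  have hdiff : ∀ a b : ℝ, 0 < a → a < b →
      |Pav w b - Pav w a| ≤ C * (Real.log b - Real.log a) := by
    intro a b ha hab
    have hb : 0 < b := ha.trans hab
    rw [aux_identity hwInt ha hab]
    have hint2 : IntegrableOn (fun s : ℝ => C * s⁻¹) (Ioc a b) := by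
      refine ((continuousOn_const.mul (continuousOn_inv₀.mono (fun x hx =>
        ne_of_gt (lt_of_lt_of_le ha hx.1)))).integrableOn_compact
        isCompact_Icc).mono_set Ioc_subset_Icc_self
    have hb1 : |∫ s in Ioc a b, (w s - Pav w s) / s| ≤ ∫ s in Ioc a b, C * s⁻¹ := by
      rw [← Real.norm_eq_abs]
      refine norm_integral_le_of_norm_le hint2 ?_
      filter_upwards [ae_restrict_mem measurableSet_Ioc] with s hs
      have hs0 : 0 < s := ha.trans hs.1
      rw [Real.norm_eq_abs, abs_div, abs_of_pos hs0, ← div_eq_mul_inv]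
      exact (div_le_div_iff_of_pos_right hs0).mpr (abs_sub_comm (w s) (Pav w s) ▸ hW s hs0)
    have hval : (∫ s in Ioc a b, C * s⁻¹) = C * (Real.log b - Real.log a) := by
      rw [integral_const_mul, ← intervalIntegral.integral_of_le hab.le,
        integral_inv_of_pos ha hb, Real.log_div (ne_of_gt hb) (ne_of_gt ha)]
    rw [← hval]
    exact hb1
  rcases lt_trichotomy t 1 with h | h | h
  · have hd := hdiff t 1 ht h
    have hlt : Real.log t < 0 := Real.log_neg ht h
    rw [Real.log_one] at hd
    have habs : |Real.log t| = -Real.log t := abs_of_neg hlt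
    have h1 : |Pav w t| ≤ |Pav w 1| + C * (0 - Real.log t) := by
      have := abs_sub_abs_le_abs_sub (Pav w t) (Pav w 1)
      rw [← abs_sub_comm] at hd
      linarith
    rw [habs]
    nlinarith [abs_nonneg (Pav w 1)]
  · subst h
    simp only [Real.log_one, abs_zero]
    nlinarith [abs_nonneg (Pav w 1)]
  · have hd := hdiff 1 t one_pos h
    have hlt : 0 < Real.log t := Real.log_pos h
    rw [Real.log_one] at hd
    have habs : |Real.log t| = Real.log t := abs_of_pos hlt
    have h1 : |Pav w t| ≤ |Pav w 1| + C * (Real.log t - 0) := by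
      have := abs_sub_abs_le_abs_sub (Pav w t) (Pav w 1)
      linarith
    rw [habs]
    nlinarith [abs_nonneg (Pav w 1)]

lemma aux_split {F : Type*} [NormedAddCommGroup F] [NormedSpace ℝ F]
    (f : ℝ → F) (hf : IntegrableOn f (Ioi 0)) {t : ℝ} (ht : 0 < t) :
    (∫ s in Ioi (0:ℝ), f s) = (∫ s in Ioo (0:ℝ) t, f s) + ∫ s in Ici t, f s := by
  have hun : Ioo (0:ℝ) t ∪ Ici t = Ioi 0 := by
    ext x
    simp only [mem_union, mem_Ioo, mem_Ici, mem_Ioi]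
    constructor
    · rintro (⟨h1, _⟩ | h1)
      · exact h1
      · exact ht.trans_le h1
    · intro hx
      rcases lt_or_ge x t with h | h
      · exact Or.inl ⟨hx, h⟩
      · exact Or.inr h
  have hdisj : Disjoint (Ioo (0:ℝ) t) (Ici t) := by
    rw [Set.disjoint_left]
    rintro x hx1 hx2
    exact absurd hx1.2 (not_lt.mpr hx2)
  have h1 : IntegrableOn f (Ioo 0 t) := hf.mono_set (fun x hx => hx.1)
  have h2 : IntegrableOn f (Ici t) := hf.mono_set (fun x hx => ht.trans_le hx)
  rw [← hun, setIntegral_union hdisj measurableSet_Ici h1 h2]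

/-- Vanishing of the second-order boundary term:
`Pw(t) ∫₀ᵗ Pw(s) u(s) ds/s → 0` as `t → 0⁺` and as `t → ∞`. -/
theorem second_order_boundary_term_vanishes {E : Type*} [NormedAddCommGroup E]
    [NormedSpace ℝ E] [CompleteSpace E] (u : ℝ → E) (w : ℝ → ℝ) (C : ℝ)
    (hu_meas : AEStronglyMeasurable u (volume.restrict (Ioi 0)))
    (hu_int : IntegrableOn (fun s => (1 + |Real.log s|) ^ 2 * ‖u s‖ / s) (Ioi 0))
    (hu_cancel : ∫ s in Ioi (0 : ℝ), s⁻¹ • u s = 0)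
    (hu_cancel' : ∫ s in Ioi (0 : ℝ), (Pav w s / s) • u s = 0)
    (hwInt : ∀ t > (0 : ℝ), IntegrableOn w (Ioo 0 t))
    (hW : ∀ t > (0 : ℝ), |Pav w t - w t| ≤ C) :
    Tendsto (fun t : ℝ => Pav w t • ∫ s in Ioo (0 : ℝ) t, (Pav w s / s) • u s)
      (nhdsWithin 0 (Ioi 0)) (nhds 0) ∧
    Tendsto (fun t : ℝ => Pav w t • ∫ s in Ioo (0 : ℝ) t, (Pav w s / s) • u s)
      atTop (nhds 0) := by
  obtain ⟨K, hK0, hKb⟩ := aux_log_bound hwInt hW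
  set g : ℝ → E := fun s => (Pav w s / s) • u s with hgdef
  -- measurability of g
  have hPav_meas : AEStronglyMeasurable (fun s => Pav w s / s) (volume.restrict (Ioi 0)) := by
    have hcont : ContinuousOn
        (fun s => ((1/s) * ∫ x in (0:ℝ)..s, (Ioi (0:ℝ)).indicator w x) / s) (Ioi 0) := by
      apply ContinuousOn.div
      · exact (continuousOn_const.div continuousOn_id (fun x hx => ne_of_gt hx)).mul
          (aux_cont_primitive hwInt).continuousOn
      · exact continuousOn_id
      · exact fun x hx => ne_of_gt hx
    refine (hcont.aestronglyMeasurable measurableSet_Ioi).congr ?_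
    filter_upwards [ae_restrict_mem measurableSet_Ioi] with s hs
    simp only [Pav]
    rw [aux_G_eq hwInt hs]
  have hg_meas : AEStronglyMeasurable g (volume.restrict (Ioi 0)) := hPav_meas.smul hu_meas
  -- basic norm bound
  have hb1 : ∀ s : ℝ, 0 < s → ‖g s‖ ≤ (K * (1 + |Real.log s|)) * (‖u s‖ / s) := by
    intro s hs
    rw [hgdef]
    simp only
    rw [norm_smul, Real.norm_eq_abs, abs_div, abs_of_pos hs]
    have h1 : |Pav w s| / s ≤ K * (1 + |Real.log s|) / s :=
      (div_le_div_iff_of_pos_right hs).mpr (hKb s hs)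
    calc |Pav w s| / s * ‖u s‖ ≤ K * (1 + |Real.log s|) / s * ‖u s‖ :=
          mul_le_mul_of_nonneg_right h1 (norm_nonneg _)
      _ = (K * (1 + |Real.log s|)) * (‖u s‖ / s) := by ring
  -- dominating function
  set h2 : ℝ → ℝ := fun s => K^2 * ((1 + |Real.log s|)^2 * ‖u s‖ / s) with hh2def
  have hh2_int : IntegrableOn h2 (Ioi 0) := hu_int.const_mul _
  -- pointwise domination
  have hdom : ∀ t s : ℝ, 0 < t → 0 < s → |Real.log t| ≤ |Real.log s| →
      |Pav w t| * ‖g s‖ ≤ h2 s := by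
    intro t s ht hs hlog
    have hA : (0:ℝ) ≤ 1 + |Real.log s| := by positivity
    have h1 : |Pav w t| ≤ K * (1 + |Real.log s|) :=
      le_trans (hKb t ht) (by nlinarith)
    calc |Pav w t| * ‖g s‖
        ≤ (K * (1 + |Real.log s|)) * ((K * (1 + |Real.log s|)) * (‖u s‖ / s)) := by
          refine mul_le_mul h1 (hb1 s hs) (norm_nonneg _) (by positivity)
      _ = h2 s := by rw [hh2def]; ring
  -- integrability of g
  have hg_int : IntegrableOn g (Ioi 0) := by
    refine Integrable.mono' (hu_int.const_mul K) hg_meas ?_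
    filter_upwards [ae_restrict_mem measurableSet_Ioi] with s hs
    have hs0 : (0:ℝ) < s := hs
    have hnn : (0:ℝ) ≤ K * (‖u s‖ / s) :=
      mul_nonneg hK0 (div_nonneg (norm_nonneg _) hs0.le)
    calc ‖g s‖ ≤ (K * (1 + |Real.log s|)) * (‖u s‖ / s) := hb1 s hs0
      _ = (1 + |Real.log s|) * (K * (‖u s‖ / s)) := by ring
      _ ≤ (1 + |Real.log s|)^2 * (K * (‖u s‖ / s)) := by
          refine mul_le_mul_of_nonneg_right ?_ hnn
          nlinarith [abs_nonneg (Real.log s)]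
      _ = K * ((1 + |Real.log s|)^2 * ‖u s‖ / s) := by ring
  -- the split identity
  have hsplit : ∀ t : ℝ, 0 < t →
      (∫ s in Ioo (0:ℝ) t, g s) = - ∫ s in Ici t, g s := by
    intro t ht
    have h := aux_split g hg_int ht
    refine eq_neg_of_add_eq_zero_left ?_
    rw [← h]
    exact hu_cancel'
  -- bound for large t
  have hbound_top : ∀ t : ℝ, 1 ≤ t →
      ‖Pav w t • ∫ s in Ioo (0:ℝ) t, g s‖ ≤ ∫ s in Ici t, h2 s := by
    intro t ht1
    have ht : (0:ℝ) < t := lt_of_lt_of_le one_pos ht1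
    have hsub : Ici t ⊆ Ioi (0:ℝ) := fun x hx => ht.trans_le hx
    rw [hsplit t ht, smul_neg, norm_neg, norm_smul, Real.norm_eq_abs]
    calc |Pav w t| * ‖∫ s in Ici t, g s‖
        ≤ |Pav w t| * ∫ s in Ici t, ‖g s‖ :=
          mul_le_mul_of_nonneg_left (norm_integral_le_integral_norm _) (abs_nonneg _)
      _ = ∫ s in Ici t, |Pav w t| * ‖g s‖ := (integral_const_mul _ _).symm
      _ ≤ ∫ s in Ici t, h2 s := by
          refine setIntegral_mono_on
            (((hg_int.mono_set hsub).norm.const_mul) _)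
            (hh2_int.mono_set hsub) measurableSet_Ici (fun s hs => ?_)
          have hs0 : (0:ℝ) < s := ht.trans_le hs
          refine hdom t s ht hs0 ?_
          rw [abs_of_nonneg (Real.log_nonneg ht1),
            abs_of_nonneg (Real.log_nonneg (ht1.trans hs))]
          exact Real.log_le_log ht hs
  -- tail integral tendsto zero
  have htail : Tendsto (fun t : ℝ => ∫ s in Ici t, h2 s) atTop (𝓝 0) := by
    have h1 : Tendsto (fun t : ℝ => ∫ s in (0:ℝ)..t, h2 s) atTop
        (𝓝 (∫ s in Ioi (0:ℝ), h2 s)) :=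
      intervalIntegral_tendsto_integral_Ioi 0 hh2_int tendsto_id
    have h2eq : (fun t : ℝ => ∫ s in Ici t, h2 s) =ᶠ[atTop]
        (fun t : ℝ => (∫ s in Ioi (0:ℝ), h2 s) - ∫ s in (0:ℝ)..t, h2 s) := by
      filter_upwards [eventually_gt_atTop (0:ℝ)] with t ht
      have hioc : (∫ s in (0:ℝ)..t, h2 s) = ∫ s in Ioo (0:ℝ) t, h2 s := by
        rw [intervalIntegral.integral_of_le ht.le, integral_Ioc_eq_integral_Ioo]
      rw [hioc, aux_split h2 hh2_int ht]
      ring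
    refine Tendsto.congr' h2eq.symm ?_
    have h3 := (tendsto_const_nhds (x := ∫ s in Ioi (0:ℝ), h2 s) (f := atTop)).sub h1
    simpa using h3
  -- limit at infinity
  have htop : Tendsto (fun t : ℝ => Pav w t • ∫ s in Ioo (0 : ℝ) t, g s)
      atTop (𝓝 0) := by
    refine squeeze_zero_norm' ?_ htail
    filter_upwards [eventually_ge_atTop (1:ℝ)] with t ht
    exact hbound_top t ht
  -- bound for small t
  have hbound_zero : ∀ t : ℝ, 0 < t → t ≤ 1 →
      ‖Pav w t • ∫ s in Ioo (0:ℝ) t, g s‖ ≤ ∫ s in Ioo (0:ℝ) t, h2 s := by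
    intro t ht ht1
    have hsub : Ioo (0:ℝ) t ⊆ Ioi (0:ℝ) := fun x hx => hx.1
    rw [norm_smul, Real.norm_eq_abs]
    calc |Pav w t| * ‖∫ s in Ioo (0:ℝ) t, g s‖
        ≤ |Pav w t| * ∫ s in Ioo (0:ℝ) t, ‖g s‖ :=
          mul_le_mul_of_nonneg_left (norm_integral_le_integral_norm _) (abs_nonneg _)
      _ = ∫ s in Ioo (0:ℝ) t, |Pav w t| * ‖g s‖ := (integral_const_mul _ _).symm
      _ ≤ ∫ s in Ioo (0:ℝ) t, h2 s := by
          refine setIntegral_mono_on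
            (((hg_int.mono_set hsub).norm.const_mul) _)
            (hh2_int.mono_set hsub) measurableSet_Ioo (fun s hs => ?_)
          refine hdom t s ht hs.1 ?_
          have hlt : Real.log t ≤ 0 := Real.log_nonpos ht.le ht1
          have hls : Real.log s ≤ Real.log t := Real.log_le_log hs.1 hs.2.le
          rw [abs_of_nonpos hlt, abs_of_nonpos (hls.trans hlt)]
          linarith
  -- small integral tendsto zero
  have hzero : Tendsto (fun t : ℝ => ∫ s in Ioo (0:ℝ) t, h2 s)
      (nhdsWithin 0 (Ioi 0)) (𝓝 0) := by
    have hmeaszero : Tendsto (fun t : ℝ => volume.restrict (Ioi 0) (Ioo 0 t))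
        (nhdsWithin 0 (Ioi 0)) (𝓝 0) := by
      have heq : ∀ t : ℝ, volume.restrict (Ioi 0) (Ioo 0 t) = ENNReal.ofReal t := by
        intro t
        rw [Measure.restrict_apply measurableSet_Ioo,
          inter_eq_left.mpr (fun x hx => hx.1), Real.volume_Ioo, sub_zero]
      simp only [heq]
      have h1 : Tendsto (fun t : ℝ => ENNReal.ofReal t) (nhdsWithin 0 (Ioi 0))
          (𝓝 (ENNReal.ofReal 0)) :=
        (ENNReal.continuous_ofReal.tendsto 0).comp
          (tendsto_id.mono_left nhdsWithin_le_nhds)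
      simpa using h1
    have h := hh2_int.tendsto_setIntegral_nhds_zero hmeaszero
    refine Tendsto.congr (fun t => ?_) h
    rw [Measure.restrict_restrict measurableSet_Ioo,
      inter_eq_left.mpr (fun x hx => hx.1)]
  have h0 : Tendsto (fun t : ℝ => Pav w t • ∫ s in Ioo (0 : ℝ) t, g s)
      (nhdsWithin 0 (Ioi 0)) (𝓝 0) := by
    refine squeeze_zero_norm' ?_ hzero
    filter_upwards [Ioc_mem_nhdsGT_of_mem (Set.mem_Ico.mpr ⟨le_rfl, one_pos⟩)] with t ht
    exact hbound_zero t ht.1 ht.2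
  exact ⟨h0, htop⟩
end
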